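/- arXiv:1908.05675 — 7 statements merged into one kernel-verified Lean document; each statement's English description precedes it below -/
import Mathlib

section
/- Let Δ > 0 and assume condition (condL). Then the function L(x,y) := x^u · y^v · ((a₀/v)x² + (a₁/(v+1))xy + (b₂/u)y²), defined for x, y > 0 using real-exponent powers, is a first integral of the cubic vector field X: for every x, y > 0, the Lie derivative vanishes, i.e. (∂L/∂x)(x,y) · x(a₀x²+a₁xy+a₂y²) − (∂L/∂y)(x,y) · y(b₀x²+b₁xy+b₂y²) = 0. -/
set_option maxHeartbeats 1000000


/-- If `Δ > 0` and condition (condL) holds, then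
`L(x,y) = x^u y^v (a₀/v x² + a₁/(v+1) xy + b₂/u y²)` (real-exponent powers)
is a first integral of the cubic vector field `X`: its Lie derivative along `X`
vanishes for all `x, y > 0`. -/
theorem first_integral_cubic_saddle
    (a₀ a₁ a₂ b₀ b₁ b₂ : ℝ)
    (ha₀ : 0 < a₀) (ha₂ : 0 < a₂) (hb₀ : 0 < b₀) (hb₂ : 0 < b₂)
    (c₀ c₁ c₂ Δ u v : ℝ)
    (hc₀ : c₀ = a₀ + b₀) (hc₁ : c₁ = a₁ + b₁) (hc₂ : c₂ = a₂ + b₂)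
    (hΔdef : Δ = a₂ * b₀ - a₀ * b₂)
    (hdisc : c₁ ^ 2 < 4 * c₀ * c₂)
    (hΔ : 0 < Δ)
    (hu : u = 2 * b₂ * c₀ / Δ) (hv : v = 2 * a₀ * c₂ / Δ)
    (hcondL : b₁ * (v + 1) = a₁ * (u + 1)) :
    ∀ x y : ℝ, 0 < x → 0 < y →
      deriv (fun s : ℝ => s ^ u * y ^ v *
          (a₀ / v * s ^ 2 + a₁ / (v + 1) * s * y + b₂ / u * y ^ 2)) x *
        (x * (a₀ * x ^ 2 + a₁ * x * y + a₂ * y ^ 2))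
      - deriv (fun s : ℝ => x ^ u * s ^ v *
          (a₀ / v * x ^ 2 + a₁ / (v + 1) * x * s + b₂ / u * s ^ 2)) y *
        (y * (b₀ * x ^ 2 + b₁ * x * y + b₂ * y ^ 2)) = 0 := by
  intro x y hx hy
  have hc₀p : 0 < c₀ := by rw [hc₀]; linarith
  have hc₂p : 0 < c₂ := by rw [hc₂]; linarith
  have hup : 0 < u := by rw [hu]; positivity
  have hvp : 0 < v := by rw [hv]; positivity
  have hv1 : v + 1 ≠ 0 := by positivity
  have hd1 : HasDerivAt (fun s : ℝ => s ^ u * y ^ v *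
      (a₀ / v * s ^ 2 + a₁ / (v + 1) * s * y + b₂ / u * y ^ 2))
      ((u * x ^ (u - 1) * y ^ v) * (a₀ / v * x ^ 2 + a₁ / (v + 1) * x * y + b₂ / u * y ^ 2)
        + (x ^ u * y ^ v) * (a₀ / v * (2 * x) + a₁ / (v + 1) * y)) x := by
    have h1 : HasDerivAt (fun s : ℝ => s ^ u * y ^ v) (u * x ^ (u - 1) * y ^ v) x :=
      (Real.hasDerivAt_rpow_const (Or.inl hx.ne')).mul_const _
    have h2 : HasDerivAt (fun s : ℝ => a₀ / v * s ^ 2 + a₁ / (v + 1) * s * y + b₂ / u * y ^ 2)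
        (a₀ / v * (2 * x) + a₁ / (v + 1) * y) x := by
      have := ((((hasDerivAt_pow 2 x).const_mul (a₀ / v)).add
        (((hasDerivAt_id x).mul_const y).const_mul (a₁ / (v + 1)))).add_const (b₂ / u * y ^ 2))
      convert this using 1
      · rfl
      · rfl
      · funext s; simp only [Pi.add_apply, id_eq]; ring
      · norm_num
    exact h1.mul h2
  have hd2 : HasDerivAt (fun s : ℝ => x ^ u * s ^ v *
      (a₀ / v * x ^ 2 + a₁ / (v + 1) * x * s + b₂ / u * s ^ 2))
      ((x ^ u * (v * y ^ (v - 1))) * (a₀ / v * x ^ 2 + a₁ / (v + 1) * x * y + b₂ / u * y ^ 2)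
        + (x ^ u * y ^ v) * (a₁ / (v + 1) * x + b₂ / u * (2 * y))) y := by
    have h1 : HasDerivAt (fun s : ℝ => x ^ u * s ^ v) (x ^ u * (v * y ^ (v - 1))) y :=
      (Real.hasDerivAt_rpow_const (Or.inl hy.ne')).const_mul _
    have h2 : HasDerivAt (fun s : ℝ => a₀ / v * x ^ 2 + a₁ / (v + 1) * x * s + b₂ / u * s ^ 2)
        (a₁ / (v + 1) * x + b₂ / u * (2 * y)) y := by
      have := ((((hasDerivAt_id y).const_mul (a₁ / (v + 1) * x)).const_add (a₀ / v * x ^ 2)).add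
        (((hasDerivAt_pow 2 y).const_mul (b₂ / u))))
      convert this using 1
      · rfl
      · rfl
      · funext s; simp only [Pi.add_apply, id_eq]
      · norm_num
    exact h1.mul h2
  rw [hd1.deriv, hd2.deriv, Real.rpow_sub hx, Real.rpow_sub hy, Real.rpow_one, Real.rpow_one]
  have hΔ0 : Δ ≠ 0 := hΔ.ne'
  have h1 : a₀ * (u + 2) = b₀ * v := by
    rw [hu, hv, hc₀, hc₂]; field_simp; rw [hΔdef]; ring
  have h2 : a₂ * u = b₂ * (v + 2) := by
    rw [hu, hv, hc₀, hc₂]; field_simp; rw [hΔdef]; ring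
  field_simp
  linear_combination (u*(v+1) * x^2 * (a₀*x^2+a₁*x*y+a₂*y^2) * (x^u*y^v)) * h1
    - (u*v * x * y * (a₀*x^2+a₁*x*y+a₂*y^2) * (x^u*y^v)) * hcondL
    + (v*(v+1) * y^2 * (b₀*x^2+b₁*x*y+b₂*y^2) * (x^u*y^v)) * h2
end

section
/- Assume Δ > 0. Let x, y, ξ, η > 0 satisfy the level-set equation x^u · y^v · (c₀x² + c₁xy + c₂y²) = ξ^u · η^v · (c₀ξ² + c₁ξη + c₂η²), and set M := y/x. Then x² = ξ^{1/β₂} · η^{1/β₀} · M^{−1/β₀} · ((c₀ξ² + c₁ξη + c₂η²)/(c₀ + c₁M + c₂M²))^{1 − 1/(2β₀) − 1/(2β₂)}. -/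
set_option maxHeartbeats 1000000


/-- For `Δ > 0`, on a level set of the first integral
(`x^u y^v (c₀x² + c₁xy + c₂y²) = ξ^u η^v (c₀ξ² + c₁ξη + c₂η²)`), writing `M = y/x`,
one can solve for `x²`:
`x² = ξ^{1/β₂} η^{1/β₀} M^{−1/β₀} ((c₀ξ² + c₁ξη + c₂η²)/(c₀ + c₁M + c₂M²))^{1 − 1/(2β₀) − 1/(2β₂)}`. -/
theorem level_set_solve_x_sq
    (a₀ a₁ a₂ b₀ b₁ b₂ : ℝ)
    (ha₀ : 0 < a₀) (ha₂ : 0 < a₂) (hb₀ : 0 < b₀) (hb₂ : 0 < b₂)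
    (c₀ c₁ c₂ Δ u v β₀ β₂ : ℝ)
    (hc₀ : c₀ = a₀ + b₀) (hc₁ : c₁ = a₁ + b₁) (hc₂ : c₂ = a₂ + b₂)
    (hΔdef : Δ = a₂ * b₀ - a₀ * b₂) (hΔ : 0 < Δ)
    (hdisc : c₁ ^ 2 < 4 * c₀ * c₂)
    (hu : u = 2 * b₂ * c₀ / Δ) (hv : v = 2 * a₀ * c₂ / Δ)
    (hβ₀ : β₀ = (a₀ + b₀) / (2 * a₀)) (hβ₂ : β₂ = (a₂ + b₂) / (2 * b₂))
    (x y ξ η : ℝ) (hx : 0 < x) (hy : 0 < y) (hξ : 0 < ξ) (hη : 0 < η)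
    (hlevel : x ^ u * y ^ v * (c₀ * x ^ 2 + c₁ * x * y + c₂ * y ^ 2)
      = ξ ^ u * η ^ v * (c₀ * ξ ^ 2 + c₁ * ξ * η + c₂ * η ^ 2))
    (M : ℝ) (hM : M = y / x) :
    x ^ 2 = ξ ^ (1 / β₂) * η ^ (1 / β₀) * M ^ (-(1 / β₀)) *
      ((c₀ * ξ ^ 2 + c₁ * ξ * η + c₂ * η ^ 2) / (c₀ + c₁ * M + c₂ * M ^ 2))
        ^ (1 - 1 / (2 * β₀) - 1 / (2 * β₂)) := by
  have hc₀p : 0 < c₀ := by rw [hc₀]; linarith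
  have hc₂p : 0 < c₂ := by rw [hc₂]; linarith
  have hΔne : Δ ≠ 0 := hΔ.ne'
  have hMp : 0 < M := by rw [hM]; positivity
  have hdisc' : 0 < 4*c₀*c₂ - c₁^2 := by linarith
  have hQ : 0 < c₀ + c₁*M + c₂*M^2 := by nlinarith [sq_nonneg (2*c₂*M + c₁)]
  have hQξ : 0 < c₀*ξ^2 + c₁*ξ*η + c₂*η^2 := by
    nlinarith [sq_nonneg (2*c₂*η + c₁*ξ), mul_pos hdisc' (pow_pos hξ 2)]
  have hβ₀p : 0 < β₀ := by rw [hβ₀]; positivity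
  have hβ₂p : 0 < β₂ := by rw [hβ₂]; positivity
  have hy' : y = M * x := by rw [hM]; field_simp
  -- log form of the level equation
  have hlog : (u + v + 2) * Real.log x + v * Real.log M
        + Real.log (c₀ + c₁*M + c₂*M^2)
      = u * Real.log ξ + v * Real.log η
        + Real.log (c₀*ξ^2 + c₁*ξ*η + c₂*η^2) := by
    have h2 : c₀ * x ^ 2 + c₁ * x * y + c₂ * y ^ 2
        = x ^ 2 * (c₀ + c₁*M + c₂*M^2) := by rw [hy']; ring
    have := congrArg Real.log hlevel
    rw [h2, hy'] at this
    rw [Real.log_mul (by positivity) (by positivity),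
        Real.log_mul (by positivity) (by positivity),
        Real.log_mul (by positivity) (by positivity),
        Real.log_mul (by positivity) (by positivity),
        Real.log_mul (by positivity) (by positivity),
        Real.log_rpow hx, Real.log_rpow hξ, Real.log_rpow hη,
        Real.log_rpow (by positivity), Real.log_pow,
        Real.log_mul hMp.ne' hx.ne'] at this
    push_cast at this
    linarith
  have hβ₀' : β₀ = c₀ / (2*a₀) := by rw [hβ₀, hc₀]
  have hβ₂' : β₂ = c₂ / (2*b₂) := by rw [hβ₂, hc₂]
  have hS : u + v + 2 = 2*c₀*c₂/Δ := by
    rw [hu, hv, hc₀, hc₂, hΔdef]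
    have h0 : a₂*b₀ - a₀*b₂ ≠ 0 := by rw [← hΔdef]; exact hΔne
    rw [← add_div, div_add' _ _ _ h0, div_eq_div_iff h0 h0]
    ring
  have hA : (u + v + 2) * (1/β₂) = 2 * u := by
    rw [hS, hu, hβ₂']
    field_simp [hc₂p.ne']
  have hB : (u + v + 2) * (1/β₀) = 2 * v := by
    rw [hS, hv, hβ₀']
    field_simp [hc₀p.ne']
  have hE : (u + v + 2) * (1 - 1/(2*β₀) - 1/(2*β₂)) = 2 := by
    have h1 : 1/(2*β₀) = a₀/c₀ := by
      rw [hβ₀']; rw [div_eq_div_iff (by positivity) hc₀p.ne']; field_simp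
    have h2 : 1/(2*β₂) = b₂/c₂ := by
      rw [hβ₂']; rw [div_eq_div_iff (by positivity) hc₂p.ne']; field_simp
    rw [hS, h1, h2, div_mul_eq_mul_div, div_eq_iff hΔne, hc₀, hc₂, hΔdef]
    have hab : a₀ + b₀ ≠ 0 := by positivity
    have hcd : a₂ + b₂ ≠ 0 := by positivity
    field_simp
    ring
  have hSp : 0 < u + v + 2 := by
    rw [hu, hv, hc₀, hc₂]
    have : 0 < a₂*b₀ - a₀*b₂ := by rw [← hΔdef]; exact hΔ
    rw [← add_div]
    have h1 : 0 < 2*b₂*(a₀+b₀) + 2*a₀*(a₂+b₂) := by positivity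
    positivity
  have hSne : (u + v + 2) ≠ 0 := hSp.ne'
  -- final log equality
  have key : Real.log (x ^ 2)
      = Real.log (ξ ^ (1 / β₂) * η ^ (1 / β₀) * M ^ (-(1 / β₀)) *
        ((c₀ * ξ ^ 2 + c₁ * ξ * η + c₂ * η ^ 2) / (c₀ + c₁ * M + c₂ * M ^ 2))
          ^ (1 - 1 / (2 * β₀) - 1 / (2 * β₂))) := by
    rw [Real.log_mul (by positivity) (by positivity),
        Real.log_mul (by positivity) (by positivity),
        Real.log_mul (by positivity) (by positivity),
        Real.log_rpow hξ, Real.log_rpow hη, Real.log_rpow hMp,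
        Real.log_rpow (by positivity), Real.log_pow,
        Real.log_div (by positivity) (by positivity)]
    push_cast
    have goal' : (u+v+2) * ((2:ℝ) * Real.log x)
        = (u+v+2) * (1 / β₂ * Real.log ξ + 1 / β₀ * Real.log η
          + -(1 / β₀) * Real.log M
          + (1 - 1/(2*β₀) - 1/(2*β₂)) *
            (Real.log (c₀*ξ^2 + c₁*ξ*η + c₂*η^2) - Real.log (c₀ + c₁*M + c₂*M^2))) := by
      linear_combination 2 * hlog - Real.log ξ * hA - Real.log η * hB
        + Real.log M * hB
        - (Real.log (c₀*ξ^2 + c₁*ξ*η + c₂*η^2) - Real.log (c₀ + c₁*M + c₂*M^2)) * hE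
    have := mul_left_cancel₀ hSne goal'
    linarith
  have hL : (0:ℝ) < x ^ 2 := by positivity
  have hR : (0:ℝ) < ξ ^ (1 / β₂) * η ^ (1 / β₀) * M ^ (-(1 / β₀)) *
      ((c₀ * ξ ^ 2 + c₁ * ξ * η + c₂ * η ^ 2) / (c₀ + c₁ * M + c₂ * M ^ 2))
        ^ (1 - 1 / (2 * β₀) - 1 / (2 * β₂)) := by positivity
  calc x ^ 2 = Real.exp (Real.log (x ^ 2)) := (Real.exp_log hL).symm
    _ = _ := by rw [key, Real.exp_log hR]
end

section
/- Assume Δ > 0 and condition (condL). Let T > 0 and let (x,y) be a solution of X on [0,T] with x(t), y(t) > 0 for all t, x(0) = ξ, y(0) = η, x(T) = ζ₀, y(T) = ω. Then ∫_{ω/ζ₀}^{η/ξ} M^{1/β₀ − 1} (c₀ + c₁M + c₂M²)^{−(1/(2β₀) + 1/(2β₂))} dM = G(ξ,η) · T, where G(ξ,η) := ξ^{1/β₂} η^{1/β₀} (c₀ξ² + c₁ξη + c₂η²)^{1 − 1/(2β₀) − 1/(2β₂)}. -/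
open Set Real intervalIntegral

set_option maxHeartbeats 1000000 in
private lemma dulac_deriv_aux (a₀ a₁ a₂ b₀ b₁ b₂ X Y : ℝ)
    (ha₀ : 0 < a₀) (ha₂ : 0 < a₂) (hb₀ : 0 < b₀) (hb₂ : 0 < b₂)
    (hdisc : (a₁ + b₁) ^ 2 < 4 * (a₀ + b₀) * (a₂ + b₂))
    (hL : b₁ * (2*a₀*(a₂+b₂) + (a₂*b₀ - a₀*b₂)) = a₁ * (2*b₂*(a₀+b₀) + (a₂*b₀ - a₀*b₂)))
    (hX : 0 < X) (hY : 0 < Y) :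
    ((X * (a₀ * X ^ 2 + a₁ * X * Y + a₂ * Y ^ 2)) * (2*b₂/(a₂+b₂)) * X ^ (2*b₂/(a₂+b₂) - 1) * Y ^ (2*a₀/(a₀+b₀))
      + X ^ (2*b₂/(a₂+b₂)) * ((-(Y * (b₀ * X ^ 2 + b₁ * X * Y + b₂ * Y ^ 2))) * (2*a₀/(a₀+b₀)) * Y ^ (2*a₀/(a₀+b₀) - 1)))
        * ((a₀+b₀) * X^2 + (a₁+b₁) * X * Y + (a₂+b₂) * Y^2) ^ (1 - a₀/(a₀+b₀) - b₂/(a₂+b₂))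
    + X ^ (2*b₂/(a₂+b₂)) * Y ^ (2*a₀/(a₀+b₀)) *
        (((a₀+b₀) * (2 * X ^ 1 * (X * (a₀ * X ^ 2 + a₁ * X * Y + a₂ * Y ^ 2)))
          + (a₁+b₁) * ((X * (a₀ * X ^ 2 + a₁ * X * Y + a₂ * Y ^ 2)) * Y
              + X * (-(Y * (b₀ * X ^ 2 + b₁ * X * Y + b₂ * Y ^ 2))))
          + (a₂+b₂) * (2 * Y ^ 1 * (-(Y * (b₀ * X ^ 2 + b₁ * X * Y + b₂ * Y ^ 2)))))
         * (1 - a₀/(a₀+b₀) - b₂/(a₂+b₂))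
         * ((a₀+b₀) * X^2 + (a₁+b₁) * X * Y + (a₂+b₂) * Y^2) ^ (1 - a₀/(a₀+b₀) - b₂/(a₂+b₂) - 1))
    = 0 := by
  have hA0 : (0:ℝ) < a₀ + b₀ := by linarith
  have hA2 : (0:ℝ) < a₂ + b₂ := by linarith
  have hP : (0:ℝ) < (a₀+b₀) * X^2 + (a₁+b₁) * X * Y + (a₂+b₂) * Y^2 := by
    have h4 : 0 < (4*(a₀+b₀)*(a₂+b₂) - (a₁+b₁)^2) * X^2 :=
      mul_pos (by linarith) (pow_pos hX 2)
    nlinarith [sq_nonneg (2*(a₂+b₂)*Y + (a₁+b₁)*X)]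
  rw [Real.rpow_sub_one hX.ne' (2*b₂/(a₂+b₂)), Real.rpow_sub_one hY.ne' (2*a₀/(a₀+b₀)),
    Real.rpow_sub_one hP.ne' (1 - a₀/(a₀+b₀) - b₂/(a₂+b₂))]
  set U := X ^ (2*b₂/(a₂+b₂)) with hU
  set V := Y ^ (2*a₀/(a₀+b₀)) with hV
  set W := ((a₀+b₀) * X^2 + (a₁+b₁) * X * Y + (a₂+b₂) * Y^2) ^ (1 - a₀/(a₀+b₀) - b₂/(a₂+b₂)) with hW
  have hbr : (2*b₂/(a₂+b₂)) * (a₀ * X ^ 2 + a₁ * X * Y + a₂ * Y ^ 2)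
      - (2*a₀/(a₀+b₀)) * (b₀ * X ^ 2 + b₁ * X * Y + b₂ * Y ^ 2)
      + (1 - a₀/(a₀+b₀) - b₂/(a₂+b₂)) *
        (((a₀+b₀) * (2 * X ^ 1 * (X * (a₀ * X ^ 2 + a₁ * X * Y + a₂ * Y ^ 2)))
          + (a₁+b₁) * ((X * (a₀ * X ^ 2 + a₁ * X * Y + a₂ * Y ^ 2)) * Y
              + X * (-(Y * (b₀ * X ^ 2 + b₁ * X * Y + b₂ * Y ^ 2))))
          + (a₂+b₂) * (2 * Y ^ 1 * (-(Y * (b₀ * X ^ 2 + b₁ * X * Y + b₂ * Y ^ 2)))))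
         / ((a₀+b₀) * X^2 + (a₁+b₁) * X * Y + (a₂+b₂) * Y^2)) = 0 := by
    field_simp [hX.ne', hY.ne', hP.ne', hA0.ne', hA2.ne']
    have hD : X * (X * (a₀ + b₀) + Y * (a₁ + b₁)) + (a₂ + b₂) * Y ^ 2 ≠ 0 := by
      have := hP.ne'; contrapose! this; linear_combination this
    rw [mul_zero, ← mul_right_inj' hD, mul_zero, mul_add, mul_div_cancel₀ _ hD]
    linear_combination (-(X*Y*((a₀+b₀)*X^2+(a₁+b₁)*X*Y+(a₂+b₂)*Y^2))) * hL
  calc _ = U * V * W * ((2*b₂/(a₂+b₂)) * (a₀ * X ^ 2 + a₁ * X * Y + a₂ * Y ^ 2)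
      - (2*a₀/(a₀+b₀)) * (b₀ * X ^ 2 + b₁ * X * Y + b₂ * Y ^ 2)
      + (1 - a₀/(a₀+b₀) - b₂/(a₂+b₂)) *
        (((a₀+b₀) * (2 * X ^ 1 * (X * (a₀ * X ^ 2 + a₁ * X * Y + a₂ * Y ^ 2)))
          + (a₁+b₁) * ((X * (a₀ * X ^ 2 + a₁ * X * Y + a₂ * Y ^ 2)) * Y
              + X * (-(Y * (b₀ * X ^ 2 + b₁ * X * Y + b₂ * Y ^ 2))))
          + (a₂+b₂) * (2 * Y ^ 1 * (-(Y * (b₀ * X ^ 2 + b₁ * X * Y + b₂ * Y ^ 2)))))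
         / ((a₀+b₀) * X^2 + (a₁+b₁) * X * Y + (a₂+b₂) * Y^2))) := by
        field_simp [hX.ne', hY.ne', hP.ne', hA0.ne', hA2.ne']
        ring
    _ = 0 := by rw [hbr, mul_zero]

private lemma dulac_integrand_aux (a₀ a₁ a₂ b₀ b₁ b₂ X Y : ℝ)
    (ha₀ : 0 < a₀) (ha₂ : 0 < a₂) (hb₀ : 0 < b₀) (hb₂ : 0 < b₂)
    (hdisc : (a₁ + b₁) ^ 2 < 4 * (a₀ + b₀) * (a₂ + b₂))
    (hX : 0 < X) (hY : 0 < Y) :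
    -(Y / X * ((a₀+b₀) * X^2 + (a₁+b₁) * X * Y + (a₂+b₂) * Y^2)) *
      ((Y / X) ^ (2*a₀/(a₀+b₀) - 1) *
        ((a₀+b₀) + (a₁+b₁) * (Y / X) + (a₂+b₂) * (Y / X)^2) ^ (-(a₀/(a₀+b₀) + b₂/(a₂+b₂))))
    = -(X ^ (2*b₂/(a₂+b₂)) * Y ^ (2*a₀/(a₀+b₀)) *
        ((a₀+b₀) * X^2 + (a₁+b₁) * X * Y + (a₂+b₂) * Y^2) ^ (1 - a₀/(a₀+b₀) - b₂/(a₂+b₂))) := by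
  have hA0 : (0:ℝ) < a₀ + b₀ := by linarith
  have hA2 : (0:ℝ) < a₂ + b₂ := by linarith
  have hP : (0:ℝ) < (a₀+b₀) * X^2 + (a₁+b₁) * X * Y + (a₂+b₂) * Y^2 := by
    have h4 : 0 < (4*(a₀+b₀)*(a₂+b₂) - (a₁+b₁)^2) * X^2 :=
      mul_pos (by linarith) (pow_pos hX 2)
    nlinarith [sq_nonneg (2*(a₂+b₂)*Y + (a₁+b₁)*X)]
  have hM : 0 < Y / X := div_pos hY hX
  have hQ : 0 < (a₀+b₀) + (a₁+b₁) * (Y / X) + (a₂+b₂) * (Y / X)^2 := by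
    have h4 : 0 < 4*(a₀+b₀)*(a₂+b₂) - (a₁+b₁)^2 := by linarith
    nlinarith [sq_nonneg (2*(a₂+b₂)*(Y/X) + (a₁+b₁))]
  have hQeq : (a₀+b₀) + (a₁+b₁) * (Y / X) + (a₂+b₂) * (Y / X)^2
      = ((a₀+b₀) * X^2 + (a₁+b₁) * X * Y + (a₂+b₂) * Y^2) / X^2 := by
    field_simp
  rw [neg_mul, neg_inj, hQeq]
  apply Real.log_injOn_pos (Set.mem_Ioi.2 (by positivity)) (Set.mem_Ioi.2 (by positivity))
  rw [Real.log_mul (by positivity) (by positivity), Real.log_mul (by positivity) (by positivity),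
    Real.log_mul (by positivity) (by positivity), Real.log_mul (by positivity) (by positivity),
    Real.log_rpow hM, Real.log_mul (by positivity) (by positivity),
    Real.log_rpow (by positivity), Real.log_rpow hX, Real.log_rpow hY,
    Real.log_rpow hP, Real.log_div hY.ne' hX.ne', Real.log_div hP.ne' (by positivity),
    Real.log_pow]
  field_simp
  ring


set_option maxHeartbeats 1000000 in
/-- Separation of variables for the Dulac passage: if `(x,y)` solves
`X` on `[0,T]`, stays positive, and connects `(ξ,η)` to `(ζ₀,ω)`, then
`∫_{ω/ζ₀}^{η/ξ} M^{1/β₀−1}(c₀+c₁M+c₂M²)^{−(1/(2β₀)+1/(2β₂))} dM = G(ξ,η) T`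
with `G(ξ,η) = ξ^{1/β₂} η^{1/β₀} (c₀ξ²+c₁ξη+c₂η²)^{1−1/(2β₀)−1/(2β₂)}`. -/
theorem dulac_time_integral_equation
    (a₀ a₁ a₂ b₀ b₁ b₂ : ℝ)
    (ha₀ : 0 < a₀) (ha₂ : 0 < a₂) (hb₀ : 0 < b₀) (hb₂ : 0 < b₂)
    (c₀ c₁ c₂ Δ u v β₀ β₂ : ℝ)
    (hc₀ : c₀ = a₀ + b₀) (hc₁ : c₁ = a₁ + b₁) (hc₂ : c₂ = a₂ + b₂)
    (hΔdef : Δ = a₂ * b₀ - a₀ * b₂) (hΔ : 0 < Δ)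
    (hdisc : c₁ ^ 2 < 4 * c₀ * c₂)
    (hu : u = 2 * b₂ * c₀ / Δ) (hv : v = 2 * a₀ * c₂ / Δ)
    (hβ₀ : β₀ = (a₀ + b₀) / (2 * a₀)) (hβ₂ : β₂ = (a₂ + b₂) / (2 * b₂))
    (hcondL : b₁ * (v + 1) = a₁ * (u + 1))
    (T : ℝ) (hT : 0 < T)
    (x y : ℝ → ℝ)
    (hsol : ∀ t ∈ Set.Icc (0 : ℝ) T,
      HasDerivAt x (x t * (a₀ * x t ^ 2 + a₁ * x t * y t + a₂ * y t ^ 2)) t ∧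
      HasDerivAt y (-(y t * (b₀ * x t ^ 2 + b₁ * x t * y t + b₂ * y t ^ 2))) t)
    (hpos : ∀ t ∈ Set.Icc (0 : ℝ) T, 0 < x t ∧ 0 < y t)
    (ξ η ζ₀ ω : ℝ)
    (hx0 : x 0 = ξ) (hy0 : y 0 = η) (hxT : x T = ζ₀) (hyT : y T = ω) :
    ∫ M in (ω / ζ₀)..(η / ξ),
        M ^ (1 / β₀ - 1) *
          (c₀ + c₁ * M + c₂ * M ^ 2) ^ (-(1 / (2 * β₀) + 1 / (2 * β₂)))
      = ξ ^ (1 / β₂) * η ^ (1 / β₀) *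
          (c₀ * ξ ^ 2 + c₁ * ξ * η + c₂ * η ^ 2) ^ (1 - 1 / (2 * β₀) - 1 / (2 * β₂))
        * T := by
  subst hc₀ hc₁ hc₂ hΔdef hu hv hβ₀ hβ₂ hx0 hy0 hxT hyT
  have hA0 : (0:ℝ) < a₀ + b₀ := by linarith
  have hA2 : (0:ℝ) < a₂ + b₂ := by linarith
  have E0 : 1/((a₀+b₀)/(2*a₀)) = 2*a₀/(a₀+b₀) := one_div_div _ _
  have E2 : 1/((a₂+b₂)/(2*b₂)) = 2*b₂/(a₂+b₂) := one_div_div _ _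
  have E0' : 1/(2*((a₀+b₀)/(2*a₀))) = a₀/(a₀+b₀) := by field_simp
  have E2' : 1/(2*((a₂+b₂)/(2*b₂))) = b₂/(a₂+b₂) := by field_simp
  rw [E0, E2, E0', E2']
  have hL : b₁ * (2*a₀*(a₂+b₂) + (a₂*b₀ - a₀*b₂)) = a₁ * (2*b₂*(a₀+b₀) + (a₂*b₀ - a₀*b₂)) := by
    field_simp [hΔ.ne'] at hcondL
    linear_combination hcondL
  have hPpos : ∀ t ∈ Set.Icc (0:ℝ) T,
      0 < (a₀+b₀) * x t^2 + (a₁+b₁) * x t * y t + (a₂+b₂) * y t^2 := by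
    intro t ht
    obtain ⟨hx, hy⟩ := hpos t ht
    have h4 : 0 < (4*(a₀+b₀)*(a₂+b₂) - (a₁+b₁)^2) * x t^2 :=
      mul_pos (by linarith) (pow_pos hx 2)
    nlinarith [sq_nonneg (2*(a₂+b₂)*y t + (a₁+b₁)*x t)]
  -- H has zero derivative, hence is constant
  have hHd : ∀ t ∈ Set.Icc (0:ℝ) T, HasDerivAt (fun t =>
      x t ^ (2*b₂/(a₂+b₂)) * y t ^ (2*a₀/(a₀+b₀)) *
        ((a₀+b₀) * x t^2 + (a₁+b₁) * x t * y t + (a₂+b₂) * y t^2) ^ (1 - a₀/(a₀+b₀) - b₂/(a₂+b₂))) 0 t := by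
    intro t ht
    obtain ⟨hxd, hyd⟩ := hsol t ht
    obtain ⟨hx, hy⟩ := hpos t ht
    have hPt := hPpos t ht
    have hPd : HasDerivAt (fun t => (a₀+b₀) * x t^2 + (a₁+b₁) * x t * y t + (a₂+b₂) * y t^2)
        ((a₀+b₀) * (2 * x t ^ 1 * (x t * (a₀ * x t ^ 2 + a₁ * x t * y t + a₂ * y t ^ 2)))
          + (a₁+b₁) * ((x t * (a₀ * x t ^ 2 + a₁ * x t * y t + a₂ * y t ^ 2)) * y t
              + x t * (-(y t * (b₀ * x t ^ 2 + b₁ * x t * y t + b₂ * y t ^ 2))))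
          + (a₂+b₂) * (2 * y t ^ 1 * (-(y t * (b₀ * x t ^ 2 + b₁ * x t * y t + b₂ * y t ^ 2))))) t := by
      have h := (((hxd.pow 2).const_mul (a₀+b₀)).add
        ((hxd.const_mul (a₁+b₁)).mul hyd)).add ((hyd.pow 2).const_mul (a₂+b₂))
      refine h.congr_deriv ?_
      push_cast
      ring
    have key := ((hxd.rpow_const (p := 2*b₂/(a₂+b₂)) (Or.inl hx.ne')).mul
      (hyd.rpow_const (p := 2*a₀/(a₀+b₀)) (Or.inl hy.ne'))).mul
      (hPd.rpow_const (p := 1 - a₀/(a₀+b₀) - b₂/(a₂+b₂)) (Or.inl hPt.ne'))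
    exact key.congr_deriv
      (dulac_deriv_aux a₀ a₁ a₂ b₀ b₁ b₂ (x t) (y t) ha₀ ha₂ hb₀ hb₂ hdisc hL hx hy)
  have hconst := constant_of_has_deriv_right_zero
    (f := fun t => x t ^ (2*b₂/(a₂+b₂)) * y t ^ (2*a₀/(a₀+b₀)) *
        ((a₀+b₀) * x t^2 + (a₁+b₁) * x t * y t + (a₂+b₂) * y t^2) ^ (1 - a₀/(a₀+b₀) - b₂/(a₂+b₂)))
    (fun t ht => ((hHd t ht).continuousAt).continuousWithinAt)
    (fun t ht => (hHd t (Set.Ico_subset_Icc_self ht)).hasDerivWithinAt)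
  -- derivative of M = y/x
  have huIcc : Set.uIcc (0:ℝ) T = Set.Icc 0 T := Set.uIcc_of_le hT.le
  have hMd : ∀ t ∈ Set.uIcc (0:ℝ) T, HasDerivAt (fun t => y t / x t)
      (-(y t / x t * ((a₀+b₀) * x t^2 + (a₁+b₁) * x t * y t + (a₂+b₂) * y t^2))) t := by
    rw [huIcc]
    intro t ht
    obtain ⟨hxd, hyd⟩ := hsol t ht
    obtain ⟨hx, hy⟩ := hpos t ht
    have h := hyd.div hxd hx.ne'
    refine h.congr_deriv ?_
    field_simp
    ring
  have hxc : ContinuousOn x (Set.Icc 0 T) := fun t ht => ((hsol t ht).1.continuousAt).continuousWithinAt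
  have hyc : ContinuousOn y (Set.Icc 0 T) := fun t ht => ((hsol t ht).2.continuousAt).continuousWithinAt
  have hM'c : ContinuousOn (fun t => -(y t / x t *
      ((a₀+b₀) * x t^2 + (a₁+b₁) * x t * y t + (a₂+b₂) * y t^2))) (Set.uIcc 0 T) := by
    rw [huIcc]
    exact ((hyc.div hxc (fun t ht => (hpos t ht).1.ne')).mul
      (((continuousOn_const.mul (hxc.pow 2)).add
        ((continuousOn_const.mul hxc).mul hyc)).add
        (continuousOn_const.mul (hyc.pow 2)))).neg
  have hQc : Continuous (fun m : ℝ => a₀ + b₀ + (a₁+b₁) * m + (a₂+b₂) * m^2) := by fun_prop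
  have hQall : ∀ m : ℝ, 0 < a₀ + b₀ + (a₁+b₁) * m + (a₂+b₂) * m^2 := by
    intro m
    nlinarith [sq_nonneg (2*(a₂+b₂)*m + (a₁+b₁)), mul_pos hA0 hA2]
  have hgc : ContinuousOn (fun m : ℝ => m ^ (2*a₀/(a₀+b₀) - 1) *
      (a₀ + b₀ + (a₁+b₁) * m + (a₂+b₂) * m^2) ^ (-(a₀/(a₀+b₀) + b₂/(a₂+b₂))))
      ((fun t => y t / x t) '' Set.uIcc 0 T) := by
    rw [huIcc]
    rintro m ⟨t, ht, rfl⟩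
    obtain ⟨hx, hy⟩ := hpos t ht
    have hm : 0 < y t / x t := div_pos hy hx
    exact ((Real.continuousAt_rpow_const _ _ (Or.inl hm.ne')).mul
      (hQc.continuousAt.rpow_const (Or.inl (hQall _).ne'))).continuousWithinAt
  have hsub := intervalIntegral.integral_comp_smul_deriv' hMd hM'c hgc
  have hptw : Set.EqOn (fun t => (-(y t / x t *
        ((a₀+b₀) * x t^2 + (a₁+b₁) * x t * y t + (a₂+b₂) * y t^2))) •
        (((fun m : ℝ => m ^ (2*a₀/(a₀+b₀) - 1) *
          (a₀ + b₀ + (a₁+b₁) * m + (a₂+b₂) * m^2) ^ (-(a₀/(a₀+b₀) + b₂/(a₂+b₂)))) ∘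
          (fun t => y t / x t)) t))
      (fun _ => -(x 0 ^ (2*b₂/(a₂+b₂)) * y 0 ^ (2*a₀/(a₀+b₀)) *
        ((a₀+b₀) * x 0^2 + (a₁+b₁) * x 0 * y 0 + (a₂+b₂) * y 0^2) ^ (1 - a₀/(a₀+b₀) - b₂/(a₂+b₂))))
      (Set.uIcc 0 T) := by
    rw [huIcc]
    intro t ht
    obtain ⟨hx, hy⟩ := hpos t ht
    simp only [Function.comp, smul_eq_mul]
    rw [dulac_integrand_aux a₀ a₁ a₂ b₀ b₁ b₂ (x t) (y t) ha₀ ha₂ hb₀ hb₂ hdisc hx hy]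
    exact congrArg Neg.neg (hconst t ht)
  rw [intervalIntegral.integral_symm, ← hsub, intervalIntegral.integral_congr hptw,
    intervalIntegral.integral_const]
  simp only [smul_eq_mul, sub_zero, mul_neg, neg_neg]
  ring
end

section
/- Assume Δ > 0 and condition (condL). Let T > 0 and let (x,y) be a solution of X on [0,T] with x(t), y(t) > 0 for all t, x(0) = ξ, y(0) = η, x(T) = ζ₀, y(T) = ω. Then ξ^u · η^v · (c₀ξ² + c₁ξη + c₂η²) = ζ₀^u · ω^v · (c₀ζ₀² + c₁ζ₀ω + c₂ω²). -/
lemma key_identity (a₀ a₁ a₂ b₀ b₁ b₂ c₀ c₁ c₂ Δ u v p q : ℝ)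
    (hc₀ : c₀ = a₀ + b₀) (hc₁ : c₁ = a₁ + b₁) (hc₂ : c₂ = a₂ + b₂)
    (hΔdef : Δ = a₂ * b₀ - a₀ * b₂) (hΔ : Δ ≠ 0)
    (hu : u = 2 * b₂ * c₀ / Δ) (hv : v = 2 * a₀ * c₂ / Δ)
    (hcondL : b₁ * (v + 1) = a₁ * (u + 1)) :
    (u * (a₀*p^2 + a₁*p*q + a₂*q^2) - v * (b₀*p^2 + b₁*p*q + b₂*q^2))
        * (c₀*p^2 + c₁*p*q + c₂*q^2)
      + 2*c₀*p^2*(a₀*p^2 + a₁*p*q + a₂*q^2)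
      + c₁*p*q*((a₀*p^2 + a₁*p*q + a₂*q^2) - (b₀*p^2 + b₁*p*q + b₂*q^2))
      - 2*c₂*q^2*(b₀*p^2 + b₁*p*q + b₂*q^2) = 0 := by
  have huΔ : u * Δ = 2 * b₂ * c₀ := by rw [hu]; field_simp
  have hvΔ : v * Δ = 2 * a₀ * c₂ := by rw [hv]; field_simp
  have hcond' : b₁ * (2 * a₀ * c₂ + Δ) = a₁ * (2 * b₂ * c₀ + Δ) := by
    linear_combination Δ * hcondL - b₁ * hvΔ + a₁ * huΔ
  subst hc₀ hc₁ hc₂ hΔdef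
  apply mul_left_cancel₀ hΔ
  rw [mul_zero]
  linear_combination ((a₀*p^2 + a₁*p*q + a₂*q^2) * ((a₀+b₀)*p^2 + (a₁+b₁)*p*q + (a₂+b₂)*q^2)) * huΔ
    - ((b₀*p^2 + b₁*p*q + b₂*q^2) * ((a₀+b₀)*p^2 + (a₁+b₁)*p*q + (a₂+b₂)*q^2)) * hvΔ
    - (p*q*((a₀+b₀)*p^2 + (a₁+b₁)*p*q + (a₂+b₂)*q^2)) * hcond'

/-- Conservation of the first integral along Dulac orbits:
if `(x,y)` solves `X` on `[0,T]`, stays positive, and connects `(ξ,η)` to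
`(ζ₀,ω)`, then `ξ^u η^v (c₀ξ² + c₁ξη + c₂η²) = ζ₀^u ω^v (c₀ζ₀² + c₁ζ₀ω + c₂ω²)`. -/
theorem level_set_conservation
    (a₀ a₁ a₂ b₀ b₁ b₂ : ℝ)
    (ha₀ : 0 < a₀) (ha₂ : 0 < a₂) (hb₀ : 0 < b₀) (hb₂ : 0 < b₂)
    (c₀ c₁ c₂ Δ u v : ℝ)
    (hc₀ : c₀ = a₀ + b₀) (hc₁ : c₁ = a₁ + b₁) (hc₂ : c₂ = a₂ + b₂)
    (hΔdef : Δ = a₂ * b₀ - a₀ * b₂) (hΔ : 0 < Δ)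
    (hdisc : c₁ ^ 2 < 4 * c₀ * c₂)
    (hu : u = 2 * b₂ * c₀ / Δ) (hv : v = 2 * a₀ * c₂ / Δ)
    (hcondL : b₁ * (v + 1) = a₁ * (u + 1))
    (T : ℝ) (hT : 0 < T)
    (x y : ℝ → ℝ)
    (hsol : ∀ t ∈ Set.Icc (0 : ℝ) T,
      HasDerivAt x (x t * (a₀ * x t ^ 2 + a₁ * x t * y t + a₂ * y t ^ 2)) t ∧
      HasDerivAt y (-(y t * (b₀ * x t ^ 2 + b₁ * x t * y t + b₂ * y t ^ 2))) t)
    (hpos : ∀ t ∈ Set.Icc (0 : ℝ) T, 0 < x t ∧ 0 < y t)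
    (ξ η ζ₀ ω : ℝ)
    (hx0 : x 0 = ξ) (hy0 : y 0 = η) (hxT : x T = ζ₀) (hyT : y T = ω) :
    ξ ^ u * η ^ v * (c₀ * ξ ^ 2 + c₁ * ξ * η + c₂ * η ^ 2)
      = ζ₀ ^ u * ω ^ v * (c₀ * ζ₀ ^ 2 + c₁ * ζ₀ * ω + c₂ * ω ^ 2) := by
  set g : ℝ → ℝ := fun t =>
    x t ^ u * y t ^ v * (c₀ * x t ^ 2 + c₁ * x t * y t + c₂ * y t ^ 2) with hg
  have hderiv : ∀ t ∈ Set.Icc (0 : ℝ) T, HasDerivAt g 0 t := by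
    intro t ht
    obtain ⟨hx', hy'⟩ := hsol t ht
    obtain ⟨hxp, hyp⟩ := hpos t ht
    set P := x t with hPdef
    set Y := y t with hYdef
    have h1 : HasDerivAt (fun s => x s ^ u)
        (P * (a₀ * P ^ 2 + a₁ * P * Y + a₂ * Y ^ 2) * u * P ^ (u - 1)) t :=
      hx'.rpow_const (Or.inl hxp.ne')
    have h2 : HasDerivAt (fun s => y s ^ v)
        (-(Y * (b₀ * P ^ 2 + b₁ * P * Y + b₂ * Y ^ 2)) * v * Y ^ (v - 1)) t :=
      hy'.rpow_const (Or.inl hyp.ne')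
    have h3 : HasDerivAt (fun s => c₀ * x s ^ 2 + c₁ * x s * y s + c₂ * y s ^ 2)
        (c₀ * (2 * P ^ 1 * (P * (a₀ * P ^ 2 + a₁ * P * Y + a₂ * Y ^ 2)))
          + (c₁ * (P * (a₀ * P ^ 2 + a₁ * P * Y + a₂ * Y ^ 2)) * Y
            + c₁ * P * (-(Y * (b₀ * P ^ 2 + b₁ * P * Y + b₂ * Y ^ 2))))
          + c₂ * (2 * Y ^ 1 * (-(Y * (b₀ * P ^ 2 + b₁ * P * Y + b₂ * Y ^ 2))))) t :=
      (((hx'.pow 2).const_mul c₀).add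
        (((hx'.const_mul c₁).mul hy'))).add ((hy'.pow 2).const_mul c₂)
    have hD := (h1.mul h2).mul h3
    have hPu : P ^ u = P ^ (u - 1) * P := by
      rw [← Real.rpow_add_one hxp.ne', sub_add_cancel]
    have hYv : Y ^ v = Y ^ (v - 1) * Y := by
      rw [← Real.rpow_add_one hyp.ne', sub_add_cancel]
    have hkey := key_identity a₀ a₁ a₂ b₀ b₁ b₂ c₀ c₁ c₂ Δ u v P Y
      hc₀ hc₁ hc₂ hΔdef hΔ.ne' hu hv hcondL
    convert hD using 1
    case e'_4 => rfl
    case e'_5 => rfl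
    case e'_8 => rfl
    rw [Pi.mul_apply, hPu, hYv]
    linear_combination (-(P ^ (u - 1) * Y ^ (v - 1) * P * Y)) * hkey
  have hcont : ContinuousOn g (Set.Icc 0 T) := fun t ht =>
    (hderiv t ht).continuousAt.continuousWithinAt
  have hderiv' : ∀ t ∈ Set.Ico (0 : ℝ) T, HasDerivWithinAt g 0 (Set.Ici t) t :=
    fun t ht => (hderiv t (Set.mem_Icc_of_Ico ht)).hasDerivWithinAt
  have hconst := constant_of_has_deriv_right_zero hcont hderiv' T
    (Set.right_mem_Icc.2 hT.le)
  have h0 : g 0 = ξ ^ u * η ^ v * (c₀ * ξ ^ 2 + c₁ * ξ * η + c₂ * η ^ 2) := by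
    simp [hg, hx0, hy0]
  have hTv : g T = ζ₀ ^ u * ω ^ v * (c₀ * ζ₀ ^ 2 + c₁ * ζ₀ * ω + c₂ * ω ^ 2) := by
    simp [hg, hxT, hyT]
  rw [← h0, ← hTv, hconst]
end

section
/- (Dulac exit point asymptotics, incoming coordinate.) Assume Δ > 0 and condition (condL), and fix ζ₀, η > 0. Define ξ₀(η) := c₂^{−1/u} · η^{−a₂/b₂} · (∫₀^∞ Φ(M) dM)^{β₂}. Then for every ε > 0 there exists T₀ > 0 such that whenever T ≥ T₀ and (ξ, ω) is admissible at time T, one has |ξ · T^{β₂} − ξ₀(η)| < ε. -/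
set_option maxHeartbeats 1000000

open MeasureTheory
open Set Filter intervalIntegral

/-- `(ξ, ω)` is admissible at time `T` (for entry height `η` and exit abscissa `ζ₀`):
there is a positive solution of the cubic vector field on `[0,T]` from `(ξ,η)` to `(ζ₀,ω)`. -/
def DulacAdmissible (a₀ a₁ a₂ b₀ b₁ b₂ ζ₀ η T ξ ω : ℝ) : Prop :=
  0 < ξ ∧ 0 < ω ∧
  ∃ x y : ℝ → ℝ,
    (∀ t ∈ Set.Icc (0 : ℝ) T, 0 < x t ∧ 0 < y t) ∧
    (∀ t ∈ Set.Icc (0 : ℝ) T,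
      HasDerivAt x (x t * (a₀ * x t ^ 2 + a₁ * x t * y t + a₂ * y t ^ 2)) t ∧
      HasDerivAt y (-(y t * (b₀ * x t ^ 2 + b₁ * x t * y t + b₂ * y t ^ 2))) t) ∧
    x 0 = ξ ∧ y 0 = η ∧ x T = ζ₀ ∧ y T = ω


lemma dulac_key_ident (a₀ a₁ a₂ b₀ b₁ b₂ c₀ c₁ c₂ Δ u v : ℝ)
    (hc₀ : c₀ = a₀ + b₀) (hc₁ : c₁ = a₁ + b₁) (hc₂ : c₂ = a₂ + b₂)
    (hΔdef : Δ = a₂ * b₀ - a₀ * b₂) (hΔ : Δ ≠ 0)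
    (hu : u = 2 * b₂ * c₀ / Δ) (hv : v = 2 * a₀ * c₂ / Δ)
    (hL : b₁ * (v + 1) = a₁ * (u + 1)) (X Y : ℝ) :
    u * ((a₀*X^2 + a₁*X*Y + a₂*Y^2) * (c₀*X^2 + c₁*X*Y + c₂*Y^2))
      - v * ((b₀*X^2 + b₁*X*Y + b₂*Y^2) * (c₀*X^2 + c₁*X*Y + c₂*Y^2))
      + X * (a₀*X^2 + a₁*X*Y + a₂*Y^2) * (2*c₀*X + c₁*Y)
      - Y * (b₀*X^2 + b₁*X*Y + b₂*Y^2) * (c₁*X + 2*c₂*Y) = 0 := by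
  subst hc₀ hc₁ hc₂ hΔdef hu hv
  have hL' : b₁ * (2*a₀*(a₂+b₂) + (a₂*b₀ - a₀*b₂)) = a₁ * (2*b₂*(a₀+b₀) + (a₂*b₀-a₀*b₂)) := by
    field_simp at hL; linarith
  have hu' : 2 * b₂ * (a₀ + b₀) / (a₂ * b₀ - a₀ * b₂) * (a₂ * b₀ - a₀ * b₂) = 2 * b₂ * (a₀ + b₀) :=
    div_mul_cancel₀ _ hΔ
  have hv' : 2 * a₀ * (a₂ + b₂) / (a₂ * b₀ - a₀ * b₂) * (a₂ * b₀ - a₀ * b₂) = 2 * a₀ * (a₂ + b₂) :=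
    div_mul_cancel₀ _ hΔ
  refine (mul_eq_zero.1 (?_ : (a₂ * b₀ - a₀ * b₂) * _ = 0)).resolve_left hΔ
  linear_combination ((a₀*X^2 + a₁*X*Y + a₂*Y^2) * ((a₀+b₀)*X^2 + (a₁+b₁)*X*Y + (a₂+b₂)*Y^2)) * hu'
    - ((b₀*X^2 + b₁*X*Y + b₂*Y^2) * ((a₀+b₀)*X^2 + (a₁+b₁)*X*Y + (a₂+b₂)*Y^2)) * hv'
    - (X*Y*((a₀+b₀)*X^2 + (a₁+b₁)*X*Y + (a₂+b₂)*Y^2)) * hL'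

lemma dulac_J_deriv (a₀ a₁ a₂ b₀ b₁ b₂ c₀ c₁ c₂ Δ u v : ℝ)
    (hc₀ : c₀ = a₀ + b₀) (hc₁ : c₁ = a₁ + b₁) (hc₂ : c₂ = a₂ + b₂)
    (hΔdef : Δ = a₂ * b₀ - a₀ * b₂) (hΔ : Δ ≠ 0)
    (hu : u = 2 * b₂ * c₀ / Δ) (hv : v = 2 * a₀ * c₂ / Δ)
    (hL : b₁ * (v + 1) = a₁ * (u + 1))
    (x y : ℝ → ℝ) (t : ℝ) (hx : 0 < x t) (hy : 0 < y t)
    (hdx : HasDerivAt x (x t * (a₀ * x t ^ 2 + a₁ * x t * y t + a₂ * y t ^ 2)) t)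
    (hdy : HasDerivAt y (-(y t * (b₀ * x t ^ 2 + b₁ * x t * y t + b₂ * y t ^ 2))) t) :
    HasDerivAt (fun s => x s ^ u * y s ^ v *
      (c₀ * x s ^ 2 + c₁ * (x s * y s) + c₂ * y s ^ 2)) 0 t := by
  have h1 := hdx.rpow_const (p := u) (Or.inl hx.ne')
  have h2 := hdy.rpow_const (p := v) (Or.inl hy.ne')
  have h3 : HasDerivAt (fun s => c₀ * x s ^ 2 + c₁ * (x s * y s) + c₂ * y s ^ 2)
      (c₀ * (2 * x t * (x t * (a₀ * x t ^ 2 + a₁ * x t * y t + a₂ * y t ^ 2)))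
       + c₁ * ((x t * (a₀ * x t ^ 2 + a₁ * x t * y t + a₂ * y t ^ 2)) * y t
           + x t * (-(y t * (b₀ * x t ^ 2 + b₁ * x t * y t + b₂ * y t ^ 2))))
       + c₂ * (2 * y t * (-(y t * (b₀ * x t ^ 2 + b₁ * x t * y t + b₂ * y t ^ 2))))) t := by
    have hx2 : HasDerivAt (fun s => x s ^ 2)
        (2 * x t * (x t * (a₀ * x t ^ 2 + a₁ * x t * y t + a₂ * y t ^ 2))) t := by
      simpa [mul_comm] using (hdx.fun_pow 2)
    have hy2 : HasDerivAt (fun s => y s ^ 2)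
        (2 * y t * (-(y t * (b₀ * x t ^ 2 + b₁ * x t * y t + b₂ * y t ^ 2)))) t := by
      simpa [mul_comm] using (hdy.fun_pow 2)
    exact ((hx2.const_mul c₀).add ((hdx.mul hdy).const_mul c₁)).add (hy2.const_mul c₂)
  have H := (h1.mul h2).mul h3
  have e1 : x t ^ u = x t ^ (u-1) * x t := by
    rw [Real.rpow_sub_one hx.ne']; field_simp
  have e2 : y t ^ v = y t ^ (v-1) * y t := by
    rw [Real.rpow_sub_one hy.ne']; field_simp
  have key := dulac_key_ident a₀ a₁ a₂ b₀ b₁ b₂ c₀ c₁ c₂ Δ u v hc₀ hc₁ hc₂ hΔdef hΔ hu hv hL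
    (x t) (y t)
  refine H.congr_deriv ?_
  simp only [Pi.mul_apply]
  rw [e1, e2]
  linear_combination (x t ^ (u-1) * y t ^ (v-1) * x t * y t) * key

lemma dulac_rpow_solve (X Z W H σ v : ℝ) (hX : 0 < X) (hZ : 0 < Z) (hW : 0 < W) (hσ : σ ≠ 0)
    (h : X ^ σ * Z ^ v * W = H) :
    (Z * X ^ 2 * W)⁻¹ = H ^ (-(2/σ)) * Z ^ (2*v/σ - 1) * W ^ (2/σ - 1) := by
  have hH : 0 < H := h ▸ by positivity
  have hlog : Real.log H = σ * Real.log X + v * Real.log Z + Real.log W := by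
    rw [← h, Real.log_mul (by positivity) hW.ne', Real.log_mul (by positivity) (by positivity),
      Real.log_rpow hX, Real.log_rpow hZ]
  apply Real.log_injOn_pos (Set.mem_Ioi.2 (by positivity)) (Set.mem_Ioi.2 (by positivity))
  rw [Real.log_inv, Real.log_mul (by positivity) hW.ne', Real.log_mul hZ.ne' (by positivity),
    Real.log_mul (by positivity) (by positivity), Real.log_mul (by positivity) (by positivity),
    Real.log_rpow hH, Real.log_rpow hZ, Real.log_rpow hW, Real.log_pow]
  push_cast
  field_simp
  linear_combination 2 * hlog

lemma dulac_quad_lower₀ (c₀ c₁ c₂ : ℝ) (hc₀ : 0 < c₀) (hc₂ : 0 < c₂) (M : ℝ) :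
    (4*c₀*c₂ - c₁^2)/(4*c₂) ≤ c₀ + c₁ * M + c₂ * M ^ 2 := by
  rw [div_le_iff₀ (by positivity)]
  nlinarith [sq_nonneg (2*c₂*M + c₁)]

lemma dulac_quad_lower₂ (c₀ c₁ c₂ : ℝ) (hc₀ : 0 < c₀) (hc₂ : 0 < c₂) (M : ℝ) :
    (4*c₀*c₂ - c₁^2)/(4*c₀) * M ^ 2 ≤ c₀ + c₁ * M + c₂ * M ^ 2 := by
  rw [div_mul_eq_mul_div, div_le_iff₀ (by positivity)]
  nlinarith [sq_nonneg (2*c₀ + c₁*M)]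

lemma dulac_phi_contOn (c₀ c₁ c₂ p q : ℝ) (hc₀ : 0 < c₀) (hc₂ : 0 < c₂)
    (hdisc : c₁ ^ 2 < 4 * c₀ * c₂) :
    ∀ M : ℝ, M ≠ 0 → ContinuousAt (fun M : ℝ => M ^ p * (c₀ + c₁ * M + c₂ * M ^ 2) ^ q) M := by
  have hnum : 0 < 4*c₀*c₂ - c₁^2 := by nlinarith
  have hCpos : ∀ M : ℝ, 0 < c₀ + c₁ * M + c₂ * M ^ 2 := fun M =>
    lt_of_lt_of_le (by positivity) (dulac_quad_lower₀ c₀ c₁ c₂ hc₀ hc₂ M)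
  intro M hM
  exact (Real.continuousAt_rpow_const M p (Or.inl hM)).mul
    (((continuousAt_const.add (continuousAt_const.mul continuousAt_id)).add
      (continuousAt_const.mul (continuousAt_id.pow 2))).rpow_const (Or.inl (hCpos M).ne'))

lemma dulac_phi_integrable (c₀ c₁ c₂ p q : ℝ) (hc₀ : 0 < c₀) (hc₂ : 0 < c₂)
    (hdisc : c₁ ^ 2 < 4 * c₀ * c₂) (hp : -1 < p) (hq : q ≤ 0) (hpq : p + 2*q < -1) :
    IntegrableOn (fun M : ℝ => M ^ p * (c₀ + c₁ * M + c₂ * M ^ 2) ^ q) (Ioi 0) volume := by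
  have hnum : 0 < 4*c₀*c₂ - c₁^2 := by nlinarith
  have hm₀ : 0 < (4*c₀*c₂ - c₁^2)/(4*c₂) := by positivity
  have hm₂ : 0 < (4*c₀*c₂ - c₁^2)/(4*c₀) := by positivity
  have hCpos : ∀ M : ℝ, 0 < c₀ + c₁ * M + c₂ * M ^ 2 := fun M =>
    lt_of_lt_of_le hm₀ (dulac_quad_lower₀ c₀ c₁ c₂ hc₀ hc₂ M)
  have hmeas : ∀ s : Set ℝ, MeasurableSet s → s ⊆ Ioi 0 →
      AEStronglyMeasurable (fun M : ℝ => M ^ p * (c₀ + c₁ * M + c₂ * M ^ 2) ^ q)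
        (volume.restrict s) := fun s hs hsub =>
    ContinuousOn.aestronglyMeasurable
      (fun M hM => (dulac_phi_contOn c₀ c₁ c₂ p q hc₀ hc₂ hdisc M
        (ne_of_gt (hsub hM))).continuousWithinAt) hs
  have h1 : IntegrableOn (fun M : ℝ => M ^ p * (c₀ + c₁ * M + c₂ * M ^ 2) ^ q) (Ioc 0 1) := by
    apply Integrable.mono' (g := fun M : ℝ => ((4*c₀*c₂ - c₁^2)/(4*c₂)) ^ q * M ^ p)
      (((intervalIntegral.intervalIntegrable_rpow' hp).1).const_mul _)
      (hmeas _ measurableSet_Ioc Ioc_subset_Ioi_self)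
    rw [ae_restrict_iff' measurableSet_Ioc]
    filter_upwards with M hM
    rw [Real.norm_eq_abs, abs_mul, abs_of_nonneg (Real.rpow_nonneg hM.1.le p),
      abs_of_nonneg (Real.rpow_nonneg (hCpos M).le q), mul_comm]
    exact mul_le_mul_of_nonneg_right
      (Real.rpow_le_rpow_of_nonpos hm₀ (dulac_quad_lower₀ c₀ c₁ c₂ hc₀ hc₂ M) hq)
      (Real.rpow_nonneg hM.1.le p)
  have h2 : IntegrableOn (fun M : ℝ => M ^ p * (c₀ + c₁ * M + c₂ * M ^ 2) ^ q) (Ioi 1) := by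
    apply Integrable.mono'
      (g := fun M : ℝ => ((4*c₀*c₂ - c₁^2)/(4*c₀)) ^ q * M ^ (p + 2*q))
      ((integrableOn_Ioi_rpow_of_lt hpq one_pos).const_mul _)
      (hmeas _ measurableSet_Ioi (Ioi_subset_Ioi zero_le_one))
    rw [ae_restrict_iff' measurableSet_Ioi]
    filter_upwards with M hM
    have hM0 : (0:ℝ) < M := lt_trans one_pos hM
    rw [Real.norm_eq_abs, abs_mul, abs_of_nonneg (Real.rpow_nonneg hM0.le p),
      abs_of_nonneg (Real.rpow_nonneg (hCpos M).le q)]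
    have : ((4*c₀*c₂ - c₁^2)/(4*c₀)) ^ q * M ^ (p + 2*q)
        = M ^ p * (((4*c₀*c₂ - c₁^2)/(4*c₀)) * M ^ 2) ^ q := by
      rw [Real.mul_rpow hm₂.le (by positivity), Real.rpow_add hM0, ← Real.rpow_natCast M 2,
        ← Real.rpow_mul hM0.le]
      push_cast; ring
    rw [this]
    apply mul_le_mul_of_nonneg_left _ (Real.rpow_nonneg hM0.le p)
    exact Real.rpow_le_rpow_of_nonpos (by positivity)
      (dulac_quad_lower₂ c₀ c₁ c₂ hc₀ hc₂ M) hq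
  have : Ioi (0:ℝ) = Ioc 0 1 ∪ Ioi 1 := (Ioc_union_Ioi_eq_Ioi zero_le_one).symm
  rw [this]
  exact h1.union h2

lemma dulac_tail (Φ : ℝ → ℝ) (hint : IntegrableOn Φ (Ioi 0) volume)
    (hnn : ∀ M : ℝ, 0 < M → 0 ≤ Φ M) (ε : ℝ) (hε : 0 < ε) :
    ∃ δ N : ℝ, 0 < δ ∧ 0 < N ∧ ∀ zT z0 : ℝ, 0 < zT → zT ≤ δ → N ≤ z0 →
      (∫ M in Ioi 0, Φ M) - ε < ∫ M in Ioc zT z0, Φ M ∧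
      ∫ M in Ioc zT z0, Φ M ≤ ∫ M in Ioi 0, Φ M := by
  set s : ℕ → Set ℝ := fun n => Ioc ((n+1:ℝ))⁻¹ (n+1) with hs
  have hmono : Monotone s := by
    intro n m hnm
    have hc : (n:ℝ) ≤ m := Nat.cast_le.2 hnm
    apply Ioc_subset_Ioc
    · apply inv_anti₀ (by positivity); linarith
    · linarith
  have hunion : (⋃ n, s n) = Ioi (0:ℝ) := by
    ext x
    simp only [mem_iUnion, mem_Ioc, mem_Ioi, hs]
    constructor
    · rintro ⟨n, h1, _⟩; exact lt_trans (by positivity) h1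
    · intro hx
      obtain ⟨n, hn⟩ := exists_nat_gt (max x⁻¹ x)
      have hn1 : max x⁻¹ x < (n:ℝ) + 1 := hn.trans (lt_add_one _)
      refine ⟨n, ?_, ?_⟩
      · rw [inv_lt_comm₀ (by positivity) hx]
        exact lt_of_le_of_lt (le_max_left _ _) hn1
      · exact le_of_lt (lt_of_le_of_lt (le_max_right _ _) hn1)
  have htend := tendsto_setIntegral_of_monotone (fun n => measurableSet_Ioc) hmono
    (hunion ▸ hint) (f := Φ) (μ := volume)
  rw [hunion] at htend
  have : ∀ᶠ n in atTop, (∫ M in Ioi 0, Φ M) - ε < ∫ M in s n, Φ M :=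
    htend.eventually (eventually_gt_nhds (by linarith))
  obtain ⟨n, hn⟩ := this.exists
  have hnn' : 0 ≤ᶠ[ae (volume.restrict (Ioi (0:ℝ)))] Φ := by
    filter_upwards [ae_restrict_mem measurableSet_Ioi] with M hM using hnn M hM
  refine ⟨(n+1:ℝ)⁻¹, (n+1:ℝ), by positivity, by positivity, fun zT z0 hzT hzTd hz0 => ?_⟩
  have hsub : Ioc zT z0 ⊆ Ioi (0:ℝ) := fun M hM => lt_of_lt_of_le hzT (le_of_lt hM.1) |>.trans_le (le_refl M) |>.trans_eq rfl
  constructor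
  · refine lt_of_lt_of_le hn ?_
    apply setIntegral_mono_set (hint.mono_set hsub) ?_ ?_
    · filter_upwards [ae_restrict_mem measurableSet_Ioc] with M hM using
        hnn M (lt_of_lt_of_le hzT hM.1.le)
    · exact HasSubset.Subset.eventuallyLE (Ioc_subset_Ioc hzTd hz0)
  · exact setIntegral_mono_set hint hnn' (HasSubset.Subset.eventuallyLE hsub)

lemma dulac_quadform_lowerY (c₀ c₁ c₂ : ℝ) (hc₀ : 0 < c₀) (hc₂ : 0 < c₂) (X Y : ℝ) :
    (4*c₀*c₂ - c₁^2)/(4*c₀) * Y^2 ≤ c₀*X^2 + c₁*(X*Y) + c₂*Y^2 := by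
  rw [div_mul_eq_mul_div, div_le_iff₀ (by positivity)]
  nlinarith [sq_nonneg (2*c₀*X + c₁*Y)]

lemma dulac_quadform_lowerX (c₀ c₁ c₂ : ℝ) (hc₀ : 0 < c₀) (hc₂ : 0 < c₂) (X Y : ℝ) :
    (4*c₀*c₂ - c₁^2)/(4*c₂) * X^2 ≤ c₀*X^2 + c₁*(X*Y) + c₂*Y^2 := by
  rw [div_mul_eq_mul_div, div_le_iff₀ (by positivity)]
  nlinarith [sq_nonneg (c₁*X + 2*c₂*Y)]

theorem dulac_trajectory
    (a₀ a₁ a₂ b₀ b₁ b₂ : ℝ)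
    (ha₀ : 0 < a₀) (ha₂ : 0 < a₂) (hb₀ : 0 < b₀) (hb₂ : 0 < b₂)
    (c₀ c₁ c₂ Δ u v β₀ β₂ : ℝ)
    (hc₀ : c₀ = a₀ + b₀) (hc₁ : c₁ = a₁ + b₁) (hc₂ : c₂ = a₂ + b₂)
    (hΔdef : Δ = a₂ * b₀ - a₀ * b₂) (hΔ : 0 < Δ)
    (hdisc : c₁ ^ 2 < 4 * c₀ * c₂)
    (hu : u = 2 * b₂ * c₀ / Δ) (hv : v = 2 * a₀ * c₂ / Δ)
    (hβ₀ : β₀ = (a₀ + b₀) / (2 * a₀)) (hβ₂ : β₂ = (a₂ + b₂) / (2 * b₂))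
    (hcondL : b₁ * (v + 1) = a₁ * (u + 1))
    (ζ₀ η T ξ ω : ℝ) (hζ₀ : 0 < ζ₀) (hη : 0 < η) (hT : 0 < T)
    (hξ : 0 < ξ) (hω : 0 < ω)
    (x y : ℝ → ℝ)
    (hpos : ∀ t ∈ Set.Icc (0 : ℝ) T, 0 < x t ∧ 0 < y t)
    (hd : ∀ t ∈ Set.Icc (0 : ℝ) T,
      HasDerivAt x (x t * (a₀ * x t ^ 2 + a₁ * x t * y t + a₂ * y t ^ 2)) t ∧
      HasDerivAt y (-(y t * (b₀ * x t ^ 2 + b₁ * x t * y t + b₂ * y t ^ 2))) t)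
    (hx0 : x 0 = ξ) (hy0 : y 0 = η) (hxT : x T = ζ₀) (hyT : y T = ω) :
    ζ₀ ^ u * ω ^ v * (c₀*ζ₀^2 + c₁*(ζ₀*ω) + c₂*ω^2)
      = ξ ^ u * η ^ v * (c₀*ξ^2 + c₁*(ξ*η) + c₂*η^2) ∧
    ω/ζ₀ < η/ξ ∧
    T = (ξ ^ u * η ^ v * (c₀*ξ^2 + c₁*(ξ*η) + c₂*η^2)) ^ (-(2/(u+v+2))) *
      ∫ M in Ioc (ω/ζ₀) (η/ξ),
        M ^ (1/β₀ - 1) * (c₀ + c₁ * M + c₂ * M ^ 2) ^ (-(1/(2*β₀) + 1/(2*β₂))) := by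
  have hΔne : Δ ≠ 0 := hΔ.ne'
  have hc₀p : 0 < c₀ := by rw [hc₀]; positivity
  have hc₂p : 0 < c₂ := by rw [hc₂]; positivity
  have hup : 0 < u := by rw [hu]; positivity
  have hvp : 0 < v := by rw [hv]; positivity
  have hβ₀p : 0 < β₀ := by rw [hβ₀]; positivity
  have hβ₂p : 0 < β₂ := by rw [hβ₂]; positivity
  have hσp : 0 < u + v + 2 := by positivity
  have hσne : u + v + 2 ≠ 0 := hσp.ne'
  have hnum : 0 < 4*c₀*c₂ - c₁^2 := by nlinarith
  have hQpos : ∀ X Y : ℝ, 0 < Y → 0 < c₀*X^2 + c₁*(X*Y) + c₂*Y^2 := fun X Y hY =>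
    lt_of_lt_of_le (by positivity) (dulac_quadform_lowerY c₀ c₁ c₂ hc₀p hc₂p X Y)
  have hCCpos : ∀ M : ℝ, 0 < c₀ + c₁ * M + c₂ * M ^ 2 := fun M =>
    lt_of_lt_of_le (by positivity) (dulac_quad_lower₀ c₀ c₁ c₂ hc₀p hc₂p M)
  have h0mem : (0:ℝ) ∈ Set.Icc (0:ℝ) T := ⟨le_refl _, hT.le⟩
  have hTmem : T ∈ Set.Icc (0:ℝ) T := ⟨hT.le, le_refl _⟩
  -- the first integral
  set w : ℝ → ℝ := fun t => x t ^ u * y t ^ v *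
    (c₀ * x t ^ 2 + c₁ * (x t * y t) + c₂ * y t ^ 2) with hwdef
  have hwd : ∀ t ∈ Set.Icc (0:ℝ) T, HasDerivAt w 0 t := fun t ht =>
    dulac_J_deriv a₀ a₁ a₂ b₀ b₁ b₂ c₀ c₁ c₂ Δ u v hc₀ hc₁ hc₂ hΔdef hΔne hu hv hcondL
      x y t (hpos t ht).1 (hpos t ht).2 (hd t ht).1 (hd t ht).2
  have hwc : ∀ t ∈ Set.Icc (0:ℝ) T, w t = w 0 :=
    constant_of_has_deriv_right_zero
      (fun t ht => (hwd t ht).continuousAt.continuousWithinAt)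
      (fun t ht => (hwd t (Set.Ico_subset_Icc_self ht)).hasDerivWithinAt)
  set h : ℝ := ξ ^ u * η ^ v * (c₀*ξ^2 + c₁*(ξ*η) + c₂*η^2) with hhdef
  have hw0 : w 0 = h := by simp only [hwdef, hx0, hy0, hhdef]
  have hhpos : 0 < h := by
    have := hQpos ξ η hη
    rw [hhdef]; positivity
  have hJ : ζ₀ ^ u * ω ^ v * (c₀*ζ₀^2 + c₁*(ζ₀*ω) + c₂*ω^2) = h := by
    have hwT := hwc T hTmem
    rw [hw0, hwdef] at hwT
    simp only [hxT, hyT] at hwT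
    exact hwT
  -- the slope variable
  set z : ℝ → ℝ := fun t => y t / x t with hzdef
  have hzpos : ∀ t ∈ Set.Icc (0:ℝ) T, 0 < z t := fun t ht =>
    div_pos (hpos t ht).2 (hpos t ht).1
  have hsum : ∀ X Y : ℝ, (a₀*X^2 + a₁*X*Y + a₂*Y^2) + (b₀*X^2 + b₁*X*Y + b₂*Y^2)
      = c₀*X^2 + c₁*(X*Y) + c₂*Y^2 := by
    intro X Y; rw [hc₀, hc₁, hc₂]; ring
  have hzd : ∀ t ∈ Set.Icc (0:ℝ) T,
      HasDerivAt z (-(z t * (c₀ * x t ^ 2 + c₁ * (x t * y t) + c₂ * y t ^ 2))) t := by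
    intro t ht
    have hxt := (hpos t ht).1
    have H := (hd t ht).2.div (hd t ht).1 hxt.ne'
    refine H.congr_deriv (Eq.symm ?_)
    rw [← hsum (x t) (y t), hzdef]
    simp only
    rw [eq_div_iff (pow_ne_zero 2 hxt.ne')]
    field_simp
    ring
  have hzcont : ContinuousOn z (Set.Icc 0 T) := fun t ht =>
    (hzd t ht).continuousAt.continuousWithinAt
  have hanti : StrictAntiOn z (Set.Icc 0 T) := by
    apply strictAntiOn_of_deriv_neg (convex_Icc 0 T) hzcont
    intro t ht
    rw [interior_Icc] at ht
    have ht' := Set.Ioo_subset_Icc_self ht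
    rw [(hzd t ht').deriv]
    exact neg_lt_zero.2 (mul_pos (hzpos t ht') (hQpos (x t) (y t) (hpos t ht').2))
  have hzT0 : z T < z 0 := hanti h0mem hTmem hT
  -- pointwise solved form
  have hH : ∀ t ∈ Set.Icc (0:ℝ) T,
      x t ^ (u+v+2) * z t ^ v * (c₀ + c₁ * z t + c₂ * z t ^ 2) = h := by
    intro t ht
    have hxt := (hpos t ht).1
    have hyt := (hpos t ht).2
    have hzt := hzpos t ht
    have hCt := hCCpos (z t)
    have hD : c₀ * x t ^ 2 + c₁ * (x t * y t) + c₂ * y t ^ 2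
        = x t ^ 2 * (c₀ + c₁ * z t + c₂ * z t ^ 2) := by
      rw [hzdef]; field_simp
    have hwt : w t = h := by rw [hwc t ht, hw0]
    apply Real.log_injOn_pos (Set.mem_Ioi.2 (by positivity)) (Set.mem_Ioi.2 hhpos)
    have hlogh : Real.log h = u * Real.log (x t) + v * Real.log (y t)
        + (2 * Real.log (x t) + Real.log (c₀ + c₁ * z t + c₂ * z t ^ 2)) := by
      rw [← hwt, hwdef]
      simp only
      rw [hD, Real.log_mul (by positivity) (by positivity),
        Real.log_mul (by positivity) (by positivity),
        Real.log_rpow hxt, Real.log_rpow hyt,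
        Real.log_mul (by positivity) hCt.ne', Real.log_pow]
      push_cast; ring
    rw [Real.log_mul (by positivity) hCt.ne', Real.log_mul (by positivity) (by positivity),
      Real.log_rpow hxt, Real.log_rpow hzt, hlogh, hzdef]
    simp only
    rw [Real.log_div hyt.ne' hxt.ne']
    ring
  have hptw : ∀ t ∈ Set.Icc (0:ℝ) T,
      (z t * x t ^ 2 * (c₀ + c₁ * z t + c₂ * z t ^ 2))⁻¹
        = h ^ (-(2/(u+v+2))) * z t ^ (2*v/(u+v+2) - 1)
          * (c₀ + c₁ * z t + c₂ * z t ^ 2) ^ (2/(u+v+2) - 1) :=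
    fun t ht => dulac_rpow_solve (x t) (z t) _ h (u+v+2) v (hpos t ht).1 (hzpos t ht)
      (hCCpos (z t)) hσne (hH t ht)
  -- exponent identities
  have hΔne' : a₂ * b₀ - a₀ * b₂ ≠ 0 := by rw [← hΔdef]; exact hΔne
  have hcc : (a₀ + b₀) * (a₂ + b₂) ≠ 0 := by positivity
  have hσval : u + v + 2 = 2*((a₀+b₀)*(a₂+b₂))/(a₂*b₀ - a₀*b₂) := by
    rw [hu, hv, hc₀, hc₂, hΔdef]
    rw [← add_div, div_add' _ _ _ hΔne', div_left_inj' hΔne']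
    ring
  have hvσ : 2*v/(u+v+2) - 1 = 1/β₀ - 1 := by
    rw [hσval, hv, hβ₀, hc₂, hΔdef]
    field_simp [hΔne', hcc]
  have hqσ : 2/(u+v+2) - 1 = -(1/(2*β₀) + 1/(2*β₂)) := by
    rw [hσval, hβ₀, hβ₂]
    field_simp [hΔne', hcc]
    ring
  -- change of variables
  have huIcc : uIcc (0:ℝ) T = Set.Icc 0 T := uIcc_of_le hT.le
  set K : ℝ := h ^ (-(2/(u+v+2))) with hKdef
  set Φ : ℝ → ℝ := fun M => M ^ (1/β₀ - 1) *
    (c₀ + c₁ * M + c₂ * M ^ 2) ^ (-(1/(2*β₀) + 1/(2*β₂))) with hΦdef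
  set g : ℝ → ℝ := fun M => K * Φ M with hgdef
  set D : ℝ → ℝ := fun t => -(z t * (c₀ * x t ^ 2 + c₁ * (x t * y t) + c₂ * y t ^ 2))
    with hDdef
  have hone : ∀ t ∈ Set.Icc (0:ℝ) T, D t • (g ∘ z) t = -1 := by
    intro t ht
    have hxt := (hpos t ht).1
    have hyt := (hpos t ht).2
    have hzt := hzpos t ht
    have hCt := hCCpos (z t)
    have hD : c₀ * x t ^ 2 + c₁ * (x t * y t) + c₂ * y t ^ 2
        = x t ^ 2 * (c₀ + c₁ * z t + c₂ * z t ^ 2) := by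
      rw [hzdef]; field_simp
    have hφ : g (z t) = (z t * x t ^ 2 * (c₀ + c₁ * z t + c₂ * z t ^ 2))⁻¹ := by
      rw [hgdef, hΦdef]
      simp only
      rw [← hvσ, ← hqσ, hptw t ht, hKdef]
      ring
    simp only [Function.comp_apply, smul_eq_mul, hDdef]
    rw [hφ, hD]
    have hne : z t * x t ^ 2 * (c₀ + c₁ * z t + c₂ * z t ^ 2) ≠ 0 := by positivity
    rw [← mul_assoc, neg_mul, mul_inv_cancel₀ hne]
  have hg_cont : ContinuousOn g (z '' uIcc 0 T) := by
    intro M hM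
    obtain ⟨t, ht, rfl⟩ := hM
    rw [huIcc] at ht
    exact (continuousAt_const.mul (dulac_phi_contOn c₀ c₁ c₂ _ _ hc₀p hc₂p hdisc (z t)
      (hzpos t ht).ne')).continuousWithinAt
  have hz'cont : ContinuousOn D (uIcc 0 T) := by
    rw [huIcc]
    have hxc : ContinuousOn x (Set.Icc 0 T) := fun t ht =>
      (hd t ht).1.continuousAt.continuousWithinAt
    have hyc : ContinuousOn y (Set.Icc 0 T) := fun t ht =>
      (hd t ht).2.continuousAt.continuousWithinAt
    exact (hzcont.mul (((continuousOn_const.mul (hxc.pow 2)).add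
      (continuousOn_const.mul (hxc.mul hyc))).add
      (continuousOn_const.mul (hyc.pow 2)))).neg
  have hcv := intervalIntegral.integral_comp_smul_deriv'
    (f := z) (f' := D) (g := g)
    (fun t ht => hzd t (huIcc ▸ ht)) hz'cont hg_cont
  have hL : ∫ t in (0:ℝ)..T, D t • (g ∘ z) t = -T := by
    rw [intervalIntegral.integral_congr (g := fun _ => (-1:ℝ))
      (fun t ht => hone t (huIcc ▸ ht))]
    simp
  have hzTval : z T = ω/ζ₀ := by rw [hzdef]; simp only; rw [hxT, hyT]
  have hz0val : z 0 = η/ξ := by rw [hzdef]; simp only; rw [hx0, hy0]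
  have hlt : ω/ζ₀ < η/ξ := by rw [← hzTval, ← hz0val]; exact hzT0
  refine ⟨hJ, hlt, ?_⟩
  have hTeq : T = ∫ M in (z T)..(z 0), g M := by
    rw [intervalIntegral.integral_symm, ← hcv, hL, neg_neg]
  rw [hTeq, intervalIntegral.integral_of_le hzT0.le, hzTval, hz0val, hgdef]
  simp only
  rw [MeasureTheory.integral_const_mul, hKdef, hΦdef]

/-- (Dulac exit point asymptotics, incoming coordinate.)
For `Δ > 0` with (condL): `ξ · T^{β₂} → ξ₀(η) = c₂^{−1/u} η^{−a₂/b₂} (∫₀^∞ Φ)^{β₂}`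
as `T → ∞`, uniformly over admissible pairs. -/
theorem dulac_incoming_asymptotics
    (a₀ a₁ a₂ b₀ b₁ b₂ : ℝ)
    (ha₀ : 0 < a₀) (ha₂ : 0 < a₂) (hb₀ : 0 < b₀) (hb₂ : 0 < b₂)
    (c₀ c₁ c₂ Δ u v β₀ β₂ : ℝ)
    (hc₀ : c₀ = a₀ + b₀) (hc₁ : c₁ = a₁ + b₁) (hc₂ : c₂ = a₂ + b₂)
    (hΔdef : Δ = a₂ * b₀ - a₀ * b₂) (hΔ : 0 < Δ)
    (hdisc : c₁ ^ 2 < 4 * c₀ * c₂)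
    (hu : u = 2 * b₂ * c₀ / Δ) (hv : v = 2 * a₀ * c₂ / Δ)
    (hβ₀ : β₀ = (a₀ + b₀) / (2 * a₀)) (hβ₂ : β₂ = (a₂ + b₂) / (2 * b₂))
    (hcondL : b₁ * (v + 1) = a₁ * (u + 1))
    (ζ₀ η : ℝ) (hζ₀ : 0 < ζ₀) (hη : 0 < η)
    (ξ₀ : ℝ)
    (hξ₀ : ξ₀ = c₂ ^ (-(1 / u)) * η ^ (-(a₂ / b₂)) *
      (∫ M in Set.Ioi (0 : ℝ),
        M ^ (1 / β₀ - 1) *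
          (c₀ + c₁ * M + c₂ * M ^ 2) ^ (-(1 / (2 * β₀) + 1 / (2 * β₂)))) ^ β₂) :
    ∀ ε > 0, ∃ T₀ > 0, ∀ T ≥ T₀, ∀ ξ ω : ℝ,
      DulacAdmissible a₀ a₁ a₂ b₀ b₁ b₂ ζ₀ η T ξ ω →
      |ξ * T ^ β₂ - ξ₀| < ε := by
  intro ε hε
  have hΔne : Δ ≠ 0 := hΔ.ne'
  have hΔne' : a₂ * b₀ - a₀ * b₂ ≠ 0 := by rw [← hΔdef]; exact hΔne
  have hc₀p : 0 < c₀ := by rw [hc₀]; positivity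
  have hc₂p : 0 < c₂ := by rw [hc₂]; positivity
  have hup : 0 < u := by rw [hu]; positivity
  have hvp : 0 < v := by rw [hv]; positivity
  have hβ₀p : 0 < β₀ := by rw [hβ₀]; positivity
  have hβ₂p : 0 < β₂ := by rw [hβ₂]; positivity
  have hσp : 0 < u + v + 2 := by positivity
  have hnum : 0 < 4*c₀*c₂ - c₁^2 := by linarith
  have hCCpos : ∀ M : ℝ, 0 < c₀ + c₁ * M + c₂ * M ^ 2 := fun M =>
    lt_of_lt_of_le (by positivity) (dulac_quad_lower₀ c₀ c₁ c₂ hc₀p hc₂p M)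
  set Φ : ℝ → ℝ := fun M => M ^ (1 / β₀ - 1) *
    (c₀ + c₁ * M + c₂ * M ^ 2) ^ (-(1 / (2 * β₀) + 1 / (2 * β₂))) with hΦdef
  have hp1 : -1 < 1 / β₀ - 1 := by
    have : 0 < 1 / β₀ := by positivity
    linarith
  have hq1 : -(1 / (2 * β₀) + 1 / (2 * β₂)) ≤ 0 := by
    have : 0 < 1 / (2 * β₀) := by positivity
    have : 0 < 1 / (2 * β₂) := by positivity
    linarith
  have hpq1 : (1 / β₀ - 1) + 2 * (-(1 / (2 * β₀) + 1 / (2 * β₂))) < -1 := by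
    have h2 : 0 < 1 / β₂ := by positivity
    have : (1 / β₀ - 1) + 2 * (-(1 / (2 * β₀) + 1 / (2 * β₂))) = -1 - 1/β₂ := by
      field_simp
      ring
    rw [this]
    linarith
  have hΦint : IntegrableOn Φ (Ioi 0) volume :=
    dulac_phi_integrable c₀ c₁ c₂ _ _ hc₀p hc₂p hdisc hp1 hq1 hpq1
  have hΦnn : ∀ M : ℝ, 0 < M → 0 ≤ Φ M := fun M hM =>
    mul_nonneg (Real.rpow_nonneg hM.le _) (Real.rpow_nonneg (hCCpos M).le _)
  set I : ℝ := ∫ M in Ioi (0:ℝ), Φ M with hIdef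
  have hIpos : 0 < I := by
    rw [hIdef, setIntegral_pos_iff_support_of_nonneg_ae]
    · have hvol : (0:ENNReal) < volume (Ioi (0:ℝ)) := by simp [Real.volume_Ioi]
      exact lt_of_lt_of_le hvol (measure_mono (fun M hM =>
        ⟨ne_of_gt (mul_pos (Real.rpow_pos_of_pos hM _) (Real.rpow_pos_of_pos (hCCpos M) _)), hM⟩))
    · filter_upwards [ae_restrict_mem measurableSet_Ioi] with M hM using hΦnn M hM
    · exact hΦint
  -- continuity of the limit expression
  set G : ℝ × ℝ → ℝ := fun P => η ^ (-(v/u)) *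
    (c₀*P.1^2 + c₁*(P.1*η) + c₂*η^2) ^ (-(1/u)) * P.2 ^ β₂ with hGdef
  have hQ0 : c₀*(0:ℝ)^2 + c₁*((0:ℝ)*η) + c₂*η^2 = c₂*η^2 := by ring
  have hGcont : ContinuousAt G (0, I) := by
    apply ContinuousAt.mul
    apply ContinuousAt.mul continuousAt_const
    · apply ContinuousAt.rpow_const
      · exact (by fun_prop : Continuous fun P : ℝ×ℝ => c₀*P.1^2 + c₁*(P.1*η) + c₂*η^2).continuousAt
      · left
        show c₀*(0:ℝ)^2 + c₁*((0:ℝ)*η) + c₂*η^2 ≠ 0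
        rw [hQ0]; positivity
    · exact ContinuousAt.rpow_const (continuous_snd.continuousAt) (Or.inl hIpos.ne')
  have hab : v/u + 2/u = a₂/b₂ := by
    rw [hu, hv, hc₀, hc₂, hΔdef]
    field_simp
    ring
  have hGval : G (0, I) = ξ₀ := by
    rw [hGdef, hξ₀]
    simp only
    rw [hQ0]
    have hfac : η ^ (-(v/u)) * (c₂*η^2) ^ (-(1/u)) = c₂ ^ (-(1 / u)) * η ^ (-(a₂ / b₂)) := by
      apply Real.log_injOn_pos (Set.mem_Ioi.2 (by positivity)) (Set.mem_Ioi.2 (by positivity))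
      rw [Real.log_mul (by positivity) (by positivity),
        Real.log_mul (by positivity) (by positivity),
        Real.log_rpow hη, Real.log_rpow (by positivity), Real.log_rpow hc₂p,
        Real.log_rpow hη, Real.log_mul hc₂p.ne' (by positivity), Real.log_pow]
      push_cast
      linear_combination (-(Real.log η)) * hab
    rw [hfac]
  obtain ⟨δ, hδp, hball⟩ := Metric.continuousAt_iff.1 hGcont ε hε
  obtain ⟨δ', N, hδ'p, hNp, htail⟩ := dulac_tail Φ hΦint hΦnn (δ/2) (by positivity)
  -- thresholds
  set ρ : ℝ := min (δ/2) (η/N) with hρdef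
  have hρp : 0 < ρ := lt_min (by positivity) (by positivity)
  set θ₁ : ℝ := ρ ^ u * (η ^ v * ((4*c₀*c₂ - c₁^2)/(4*c₀)*η^2)) with hθ₁def
  set θ₂ : ℝ := ζ₀ ^ u * ((ζ₀*δ') ^ v * ((4*c₀*c₂ - c₁^2)/(4*c₂)*ζ₀^2)) with hθ₂def
  have hθ₁p : 0 < θ₁ := by
    have := Real.rpow_pos_of_pos hρp u
    have := Real.rpow_pos_of_pos hη v
    rw [hθ₁def]; positivity
  have hθ₂p : 0 < θ₂ := by
    have := Real.rpow_pos_of_pos hζ₀ u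
    have : (0:ℝ) < (ζ₀*δ') ^ v := Real.rpow_pos_of_pos (by positivity) v
    rw [hθ₂def]; positivity
  set θ : ℝ := min θ₁ θ₂ with hθdef
  have hθp : 0 < θ := lt_min hθ₁p hθ₂p
  set e : ℝ := 2/(u+v+2) with hedef
  have hep : 0 < e := by rw [hedef]; positivity
  have hθe : 0 < θ ^ e := Real.rpow_pos_of_pos hθp e
  refine ⟨max 1 (I / θ ^ e), lt_of_lt_of_le one_pos (le_max_left _ _), ?_⟩
  intro T hT ξ ω hadm
  obtain ⟨hξp, hωp, x, y, hpos, hd, hx0, hy0, hxT, hyT⟩ := hadm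
  have hTp : 0 < T := lt_of_lt_of_le (lt_of_lt_of_le one_pos (le_max_left _ _)) hT
  obtain ⟨hJT, hlt, hTeq⟩ := dulac_trajectory a₀ a₁ a₂ b₀ b₁ b₂ ha₀ ha₂ hb₀ hb₂
    c₀ c₁ c₂ Δ u v β₀ β₂ hc₀ hc₁ hc₂ hΔdef hΔ hdisc hu hv hβ₀ hβ₂ hcondL
    ζ₀ η T ξ ω hζ₀ hη hTp hξp hωp x y hpos hd hx0 hy0 hxT hyT
  set h : ℝ := ξ ^ u * η ^ v * (c₀*ξ^2 + c₁*(ξ*η) + c₂*η^2) with hhdef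
  set S : ℝ := ∫ M in Ioc (ω/ζ₀) (η/ξ), Φ M with hSdef
  have hQξη : 0 < c₀*ξ^2 + c₁*(ξ*η) + c₂*η^2 :=
    lt_of_lt_of_le (by positivity) (dulac_quadform_lowerY c₀ c₁ c₂ hc₀p hc₂p ξ η)
  have hhpos : 0 < h := by
    have := Real.rpow_pos_of_pos hξp u
    have := Real.rpow_pos_of_pos hη v
    rw [hhdef]; positivity
  have hKp : 0 < h ^ (-e) := Real.rpow_pos_of_pos hhpos _
  have hTeq' : T = h ^ (-e) * S := hTeq
  have hSpos : 0 < S := by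
    have hTp' := hTp
    rw [hTeq'] at hTp'
    rcases mul_pos_iff.1 hTp' with ⟨_, hS⟩ | ⟨hK', _⟩
    · exact hS
    · exact (lt_asymm hKp hK').elim
  have hSle : S ≤ I := by
    rw [hSdef, hIdef]
    apply setIntegral_mono_set hΦint
    · filter_upwards [ae_restrict_mem measurableSet_Ioi] with M hM using hΦnn M hM
    · exact HasSubset.Subset.eventuallyLE (fun M hM => lt_of_lt_of_le (by positivity) hM.1.le)
  -- h is small
  have hhe : h ^ e * T = S := by
    rw [hTeq', Real.rpow_neg hhpos.le]
    field_simp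
  have hheθ : h ^ e ≤ θ ^ e := by
    have h1 : I / θ ^ e ≤ T := le_trans (le_max_right _ _) hT
    have h2 : I ≤ θ ^ e * T := by
      rw [div_le_iff₀ hθe] at h1
      linarith
    have h3 : h ^ e * T ≤ θ ^ e * T := by
      rw [hhe]
      exact le_trans hSle h2
    exact le_of_mul_le_mul_right h3 hTp
  have hhθ : h ≤ θ := by
    by_contra hcon
    push_neg at hcon
    exact absurd hheθ (not_le.2 (Real.rpow_lt_rpow hθp.le hcon hep))
  -- ξ is small
  have hξρ : ξ ≤ ρ := by
    by_contra hcon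
    push_neg at hcon
    have h1 : ρ ^ u < ξ ^ u := Real.rpow_lt_rpow hρp.le hcon hup
    have hpos' : 0 < η ^ v * ((4*c₀*c₂ - c₁^2)/(4*c₀)*η^2) := by
      have := Real.rpow_pos_of_pos hη v
      positivity
    have h2 : ξ ^ u * (η ^ v * ((4*c₀*c₂ - c₁^2)/(4*c₀)*η^2)) ≤ h := by
      rw [hhdef]
      calc ξ ^ u * (η ^ v * ((4*c₀*c₂ - c₁^2)/(4*c₀)*η^2))
          = ξ ^ u * η ^ v * ((4*c₀*c₂ - c₁^2)/(4*c₀)*η^2) := by ring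
        _ ≤ ξ ^ u * η ^ v * (c₀*ξ^2 + c₁*(ξ*η) + c₂*η^2) :=
            mul_le_mul_of_nonneg_left (dulac_quadform_lowerY c₀ c₁ c₂ hc₀p hc₂p ξ η)
              (by positivity)
    have h3 : h ≤ θ₁ := le_trans hhθ (min_le_left _ _)
    rw [hθ₁def] at h3
    have h4 : ξ ^ u * (η ^ v * ((4*c₀*c₂ - c₁^2)/(4*c₀)*η^2))
        ≤ ρ ^ u * (η ^ v * ((4*c₀*c₂ - c₁^2)/(4*c₀)*η^2)) := le_trans h2 h3
    have h5 : ξ ^ u ≤ ρ ^ u := le_of_mul_le_mul_right h4 hpos'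
    exact absurd h5 (not_le.2 h1)
  -- ω is small
  have hωδ : ω ≤ ζ₀ * δ' := by
    by_contra hcon
    push_neg at hcon
    have h1 : (ζ₀*δ') ^ v < ω ^ v := Real.rpow_lt_rpow (by positivity) hcon hvp
    have hCp : 0 < ζ₀ ^ u * ((4*c₀*c₂ - c₁^2)/(4*c₂)*ζ₀^2) := by
      have := Real.rpow_pos_of_pos hζ₀ u
      positivity
    have h2 : ω ^ v * (ζ₀ ^ u * ((4*c₀*c₂ - c₁^2)/(4*c₂)*ζ₀^2)) ≤ h := by
      rw [← hJT]
      calc ω ^ v * (ζ₀ ^ u * ((4*c₀*c₂ - c₁^2)/(4*c₂)*ζ₀^2))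
          = ζ₀ ^ u * ω ^ v * ((4*c₀*c₂ - c₁^2)/(4*c₂)*ζ₀^2) := by ring
        _ ≤ ζ₀ ^ u * ω ^ v * (c₀*ζ₀^2 + c₁*(ζ₀*ω) + c₂*ω^2) :=
            mul_le_mul_of_nonneg_left (dulac_quadform_lowerX c₀ c₁ c₂ hc₀p hc₂p ζ₀ ω)
              (by positivity)
    have h3 : h ≤ θ₂ := le_trans hhθ (min_le_right _ _)
    rw [hθ₂def] at h3
    have h3' : h ≤ (ζ₀*δ') ^ v * (ζ₀ ^ u * ((4*c₀*c₂ - c₁^2)/(4*c₂)*ζ₀^2)) := by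
      calc h ≤ ζ₀ ^ u * ((ζ₀*δ') ^ v * ((4*c₀*c₂ - c₁^2)/(4*c₂)*ζ₀^2)) := h3
        _ = (ζ₀*δ') ^ v * (ζ₀ ^ u * ((4*c₀*c₂ - c₁^2)/(4*c₂)*ζ₀^2)) := by ring
    have h4 : ω ^ v ≤ (ζ₀*δ') ^ v := le_of_mul_le_mul_right (le_trans h2 h3') hCp
    exact absurd h4 (not_le.2 h1)
  -- the slope bounds
  have hzT : ω/ζ₀ ≤ δ' := by
    rw [div_le_iff₀ hζ₀]
    linarith [hωδ]
  have hz0 : N ≤ η/ξ := by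
    rw [le_div_iff₀ hξp]
    have hξ2 : ξ ≤ η/N := le_trans hξρ (min_le_right _ _)
    rw [le_div_iff₀ hNp] at hξ2
    linarith
  obtain ⟨hS1, hS2⟩ := htail (ω/ζ₀) (η/ξ) (by positivity) hzT hz0
  -- the exact formula
  have hcc : (a₀ + b₀) * (a₂ + b₂) ≠ 0 := by positivity
  have hσval : u + v + 2 = 2*((a₀+b₀)*(a₂+b₂))/(a₂*b₀ - a₀*b₂) := by
    rw [hu, hv, hc₀, hc₂, hΔdef]
    rw [← add_div, div_add' _ _ _ hΔne', div_left_inj' hΔne']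
    ring
  have heβ : e * β₂ = 1/u := by
    rw [hedef, hσval, hβ₂, hu, hc₀, hΔdef]
    field_simp [hΔne', hcc]
  have hform : ξ * T ^ β₂ = G (ξ, S) := by
    rw [hTeq', Real.mul_rpow hKp.le hSpos.le, ← Real.rpow_mul hhpos.le,
      show (-e)*β₂ = -(1/u) from by rw [← heβ]; ring]
    have hiu : u * (1/u) = 1 := by field_simp
    have hlogh : Real.log h = u * Real.log ξ + v * Real.log η
        + Real.log (c₀*ξ^2 + c₁*(ξ*η) + c₂*η^2) := by
      rw [hhdef, Real.log_mul (by positivity) hQξη.ne',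
        Real.log_mul (by positivity) (by positivity),
        Real.log_rpow hξp, Real.log_rpow hη]
    have hfac : ξ * h ^ (-(1/u))
        = η ^ (-(v/u)) * (c₀*ξ^2 + c₁*(ξ*η) + c₂*η^2) ^ (-(1/u)) := by
      apply Real.log_injOn_pos (Set.mem_Ioi.2 (by positivity)) (Set.mem_Ioi.2 (by positivity))
      rw [Real.log_mul hξp.ne' (by positivity),
        Real.log_mul (by positivity) (by positivity),
        Real.log_rpow hhpos, Real.log_rpow hη, Real.log_rpow hQξη]
      linear_combination (-(1/u)) * hlogh - Real.log ξ * hiu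
    rw [hGdef]
    simp only
    rw [← hfac]
    ring
  have hdist : dist (ξ, S) ((0:ℝ), I) < δ := by
    rw [Prod.dist_eq]
    apply max_lt
    · rw [Real.dist_eq, abs_of_pos (by simpa using hξp)]
      simp only
      have : ρ ≤ δ/2 := min_le_left _ _
      linarith [hξρ]
    · rw [Real.dist_eq]
      simp only
      rw [abs_sub_lt_iff]
      constructor <;> linarith [hS1, hS2]
  rw [hform, ← hGval, ← Real.dist_eq]
  exact hball hdist
end

section
/- (Dulac exit point asymptotics, outgoing coordinate.) Assume Δ > 0 and condition (condL), and fix ζ₀, η > 0. Define ω₀(η) := c₀^{−1/v} · ζ₀^{−b₀/a₀} · (∫₀^∞ M^{1/β₂ − 1}(c₀M² + c₁M + c₂)^{−(1/(2β₀)+1/(2β₂))} dM)^{β₀}. Then for every ε > 0 there exists T₀ > 0 such that whenever T ≥ T₀ and (ξ, ω) is admissible at time T, one has |ω · T^{β₀} − ω₀(η)| < ε. -/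
open MeasureTheory

private lemma dulac_quad_lb {c₀ c₁ c₂ : ℝ} (h0 : 0 < c₀) (h2 : 0 < c₂)
    (m : ℝ) : (4*c₀*c₂ - c₁^2)/(4*c₀) ≤ c₀*m^2+c₁*m+c₂ := by
  rw [div_le_iff₀ (by positivity)]; nlinarith [sq_nonneg (2*c₀*m+c₁)]

private lemma dulac_quad_lb' {c₀ c₁ c₂ : ℝ} (h0 : 0 < c₀) (h2 : 0 < c₂)
    (m : ℝ) : (4*c₀*c₂ - c₁^2)/(4*c₂) * m^2 ≤ c₀*m^2+c₁*m+c₂ := by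
  rw [div_mul_eq_mul_div, div_le_iff₀ (by positivity)]; nlinarith [sq_nonneg (c₁*m+2*c₂)]

set_option maxHeartbeats 4000000

/-- (Dulac exit point asymptotics, outgoing coordinate.)
For `Δ > 0` with (condL): `ω · T^{β₀} → ω₀(η) = c₀^{−1/v} ζ₀^{−b₀/a₀} (∫₀^∞ …)^{β₀}`
as `T → ∞`, uniformly over admissible pairs. -/
theorem dulac_outgoing_asymptotics
    (a₀ a₁ a₂ b₀ b₁ b₂ : ℝ)
    (ha₀ : 0 < a₀) (ha₂ : 0 < a₂) (hb₀ : 0 < b₀) (hb₂ : 0 < b₂)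
    (c₀ c₁ c₂ Δ u v β₀ β₂ : ℝ)
    (hc₀ : c₀ = a₀ + b₀) (hc₁ : c₁ = a₁ + b₁) (hc₂ : c₂ = a₂ + b₂)
    (hΔdef : Δ = a₂ * b₀ - a₀ * b₂) (hΔ : 0 < Δ)
    (hdisc : c₁ ^ 2 < 4 * c₀ * c₂)
    (hu : u = 2 * b₂ * c₀ / Δ) (hv : v = 2 * a₀ * c₂ / Δ)
    (hβ₀ : β₀ = (a₀ + b₀) / (2 * a₀)) (hβ₂ : β₂ = (a₂ + b₂) / (2 * b₂))
    (hcondL : b₁ * (v + 1) = a₁ * (u + 1))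
    (ζ₀ η : ℝ) (hζ₀ : 0 < ζ₀) (hη : 0 < η)
    (ω₀ : ℝ)
    (hω₀ : ω₀ = c₀ ^ (-(1 / v)) * ζ₀ ^ (-(b₀ / a₀)) *
      (∫ M in Set.Ioi (0 : ℝ),
        M ^ (1 / β₂ - 1) *
          (c₀ * M ^ 2 + c₁ * M + c₂) ^ (-(1 / (2 * β₀) + 1 / (2 * β₂)))) ^ β₀) :
    ∀ ε > 0, ∃ T₀ > 0, ∀ T ≥ T₀, ∀ ξ ω : ℝ,
      DulacAdmissible a₀ a₁ a₂ b₀ b₁ b₂ ζ₀ η T ξ ω →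
      |ω * T ^ β₀ - ω₀| < ε := by
  open Set intervalIntegral in
  -- ### scalar constants and identities
  have hc₀p : 0 < c₀ := by rw [hc₀]; linarith
  have hc₂p : 0 < c₂ := by rw [hc₂]; linarith
  have hβ₀p : 0 < β₀ := by rw [hβ₀]; positivity
  have hβ₂p : 0 < β₂ := by rw [hβ₂]; positivity
  have hvp : 0 < v := by rw [hv]; positivity
  obtain ⟨κ, hκdef⟩ : ∃ x : ℝ, x = Δ / (2*c₀*c₂) := ⟨_, rfl⟩
  obtain ⟨q, hqdef⟩ : ∃ x : ℝ, x = b₂ / c₂ := ⟨_, rfl⟩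
  have hκp : 0 < κ := by rw [hκdef]; positivity
  have hqp : 0 < q := by rw [hqdef]; positivity
  obtain ⟨e₁, he₁def⟩ : ∃ x : ℝ, x = 1/β₂ - 1 := ⟨_, rfl⟩
  obtain ⟨e₂, he₂def⟩ : ∃ x : ℝ, x = -(1/(2*β₀) + 1/(2*β₂)) := ⟨_, rfl⟩
  have he₁q : e₁ + 1 = q + q := by
    rw [he₁def, hβ₂, hqdef, hc₂]; field_simp; ring
  have he₂κ : e₂ + 1 = κ + κ := by
    rw [he₂def, hκdef, hβ₀, hβ₂, hc₀, hc₂, hΔdef]; field_simp; ring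
  have h3 : q + (κ + κ) = b₀ / c₀ := by
    rw [hqdef, hκdef, hc₀, hc₂, hΔdef]; field_simp; ring
  have h10 : 1 - b₀/c₀ = a₀/c₀ := by rw [hc₀]; field_simp; ring
  have hcondL' : b₁ * (2*a₀*c₂ + Δ) = a₁ * (2*b₂*c₀ + Δ) := by
    rw [hu, hv] at hcondL
    field_simp at hcondL
    linear_combination hcondL
  have hb₁ : 2*c₀*c₂*b₁ = c₁*(2*b₂*c₀ + Δ) := by
    rw [hc₀, hc₁, hc₂, hΔdef]
    rw [hc₀, hc₂, hΔdef] at hcondL'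
    linear_combination hcondL'
  have hq2 : q * c₂ = b₂ := by rw [hqdef]; field_simp
  have hk2 : (q + (κ + κ)) * c₀ = b₀ := by rw [h3]; field_simp
  have hk1 : (q + κ) * c₁ = b₁ := by
    rw [hqdef, hκdef]; field_simp; linear_combination (-1)*hb₁
  have hpoly : ∀ m : ℝ, b₀*m^2 + b₁*m + b₂ = q*(c₀*m^2+c₁*m+c₂) + κ*m*(2*c₀*m+c₁) := by
    intro m; linear_combination (-(m^2))*hk2 + (-m)*hk1 + (-1)*hq2
  have hnum : 0 < 4*c₀*c₂ - c₁^2 := by linarith [hdisc]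
  obtain ⟨δ, hδdef⟩ : ∃ x : ℝ, x = (4*c₀*c₂ - c₁^2)/(4*c₀) := ⟨_, rfl⟩
  obtain ⟨δ', hδ'def⟩ : ∃ x : ℝ, x = (4*c₀*c₂ - c₁^2)/(4*c₂) := ⟨_, rfl⟩
  have hδp : 0 < δ := hδdef ▸ div_pos hnum (by linarith)
  have hδ'p : 0 < δ' := hδ'def ▸ div_pos hnum (by linarith)
  have hκ2 : κ + κ < 1 := by
    have hΔlt : Δ < c₀*c₂ := by
      rw [hΔdef, hc₀, hc₂]; ring_nf
      linarith [mul_pos ha₀ ha₂, mul_pos ha₀ hb₂, mul_pos hb₀ hb₂]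
    rw [hκdef, ← add_div, div_lt_one (by positivity)]; linarith
  have he₂neg : e₂ < 0 := by linarith
  have he₁gt : -1 < e₁ := by linarith
  have he₁p : 0 < e₁ + 1 := by linarith
  have h1β : 1/β₀ = a₀/c₀ + a₀/c₀ := by rw [hβ₀, hc₀]; field_simp; ring
  have he₃1 : e₁ + 2*e₂ + 1 = -(1/β₀) := by rw [h1β]; linarith [he₁q, he₂κ, h3, h10]
  have he₃lt : e₁ + 2*e₂ < -1 := by
    have : 0 < 1/β₀ := by positivity
    linarith
  have hpβ : (a₀/c₀ + a₀/c₀) * β₀ = 1 := by rw [hβ₀, hc₀]; field_simp; ring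
  have h5 : 2*q*β₀ + 4*κ*β₀ = 2*β₀*(b₀/c₀) := by rw [← h3]; ring
  have h6 : 2*β₀*(a₀/c₀) = 1 := by rw [hβ₀, hc₀]; field_simp
  have h7 : 2*β₀*(1 - b₀/c₀) = 2*β₀*(a₀/c₀) := by rw [h10]
  have hLω : 1 - 2*β₀ + 2*q*β₀ + 4*κ*β₀ = 0 := by linear_combination h5 - h7 - h6
  have hLζ : 2*β₀*q + 4*β₀*κ = b₀/a₀ := by
    have h8 : 2*β₀*(b₀/c₀) = b₀/a₀ := by rw [hβ₀, hc₀]; field_simp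
    linear_combination h5 + h8
  have hLQ : 2*κ*β₀ = 1/v := by
    rw [hκdef, hβ₀, hv, hc₀]; field_simp
  -- ### the weight function g
  obtain ⟨g, hgdef⟩ : ∃ gg : ℝ → ℝ, gg = fun M : ℝ => M ^ e₁ * (c₀*M^2 + c₁*M + c₂) ^ e₂ := ⟨_, rfl⟩
  have hQlb : ∀ m : ℝ, δ ≤ c₀*m^2+c₁*m+c₂ := by
    intro m; rw [hδdef]; exact dulac_quad_lb hc₀p hc₂p m
  have hQlb' : ∀ m : ℝ, δ' * m^2 ≤ c₀*m^2+c₁*m+c₂ := by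
    intro m; rw [hδ'def]; exact dulac_quad_lb' hc₀p hc₂p m
  have hQpos : ∀ m : ℝ, 0 < c₀*m^2+c₁*m+c₂ := fun m => lt_of_lt_of_le hδp (hQlb m)
  have hgpos : ∀ m : ℝ, 0 < m → 0 < g m := by
    intro m hm; rw [hgdef]
    exact mul_pos (Real.rpow_pos_of_pos hm _) (Real.rpow_pos_of_pos (hQpos m) _)
  have hgcont : ContinuousOn g (Ioi 0) := by
    rw [hgdef]
    apply ContinuousOn.mul
    · exact fun m hm => (Real.continuousAt_rpow_const m e₁ (Or.inl (ne_of_gt hm))).continuousWithinAt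
    · apply ContinuousOn.rpow_const
      · exact (by fun_prop : Continuous fun m : ℝ => c₀*m^2+c₁*m+c₂).continuousOn
      · exact fun m _ => Or.inl (ne_of_gt (hQpos m))
  have hgmeas : ∀ s : Set ℝ, MeasurableSet s → s ⊆ Ioi 0 → AEStronglyMeasurable g (volume.restrict s) :=
    fun s hs hsub => (hgcont.mono hsub).aestronglyMeasurable hs
  have hgbound1 : ∀ m : ℝ, 0 < m → g m ≤ δ^e₂ * m^e₁ := by
    intro m hm; rw [hgdef, mul_comm (δ^e₂)]
    exact mul_le_mul_of_nonneg_left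
      (Real.rpow_le_rpow_of_nonpos hδp (hQlb m) he₂neg.le) (Real.rpow_nonneg hm.le e₁)
  have hgbound2 : ∀ m : ℝ, 0 < m → g m ≤ δ'^e₂ * m^(e₁+2*e₂) := by
    intro m hm
    have h1 : (c₀*m^2+c₁*m+c₂)^e₂ ≤ (δ'*m^2)^e₂ :=
      Real.rpow_le_rpow_of_nonpos (by positivity) (hQlb' m) he₂neg.le
    have h2 : (δ'*m^2)^e₂ = δ'^e₂ * m^(2*e₂) := by
      rw [Real.mul_rpow hδ'p.le (by positivity), ← Real.rpow_natCast m 2, ← Real.rpow_mul hm.le]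
      norm_num
    have h3' : m^e₁ * (δ'^e₂ * m^(2*e₂)) = δ'^e₂ * m^(e₁+2*e₂) := by
      rw [Real.rpow_add hm]; ring
    rw [hgdef]
    calc m^e₁ * (c₀*m^2+c₁*m+c₂)^e₂ ≤ m^e₁ * (δ'*m^2)^e₂ :=
          mul_le_mul_of_nonneg_left h1 (Real.rpow_nonneg hm.le e₁)
      _ = δ'^e₂ * m^(e₁+2*e₂) := by rw [h2]; exact h3'
  have hgint : IntegrableOn g (Ioi 0) := by
    have p1 : IntegrableOn g (Ioc 0 1) := by
      refine Integrable.mono'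
        (Integrable.const_mul ((intervalIntegrable_iff_integrableOn_Ioc_of_le zero_le_one).1
          (intervalIntegral.intervalIntegrable_rpow' he₁gt)) (δ^e₂))
        (hgmeas _ measurableSet_Ioc Ioc_subset_Ioi_self) ?_
      refine (ae_restrict_iff' measurableSet_Ioc).2 (ae_of_all _ ?_)
      intro m hm
      rw [Real.norm_eq_abs, abs_of_nonneg (le_of_lt (hgpos m hm.1))]
      exact hgbound1 m hm.1
    have p2 : IntegrableOn g (Ioi 1) := by
      refine Integrable.mono' ((integrableOn_Ioi_rpow_of_lt he₃lt one_pos).const_mul (δ'^e₂))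
        (hgmeas _ measurableSet_Ioi (fun m hm => mem_Ioi.2 (lt_trans one_pos (mem_Ioi.1 hm)))) ?_
      refine (ae_restrict_iff' measurableSet_Ioi).2 (ae_of_all _ ?_)
      intro m hm
      have hm0 : (0:ℝ) < m := lt_trans one_pos hm
      rw [Real.norm_eq_abs, abs_of_nonneg (le_of_lt (hgpos m hm0))]
      exact hgbound2 m hm0
    have hu12 := p1.union p2
    rwa [Ioc_union_Ioi_eq_Ioi zero_le_one] at hu12
  obtain ⟨I, hIdef⟩ : ∃ x : ℝ, x = ∫ M in Ioi (0:ℝ), g M := ⟨_, rfl⟩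
  have hgnonneg_ae : 0 ≤ᵐ[volume.restrict (Ioi (0:ℝ))] g :=
    (ae_restrict_iff' measurableSet_Ioi).2 (ae_of_all _ fun m hm => (hgpos m hm).le)
  have hIpos : 0 < I := by
    rw [hIdef, MeasureTheory.setIntegral_pos_iff_support_of_nonneg_ae hgnonneg_ae hgint]
    have hsub : Ioc (0:ℝ) 1 ⊆ Function.support g ∩ Ioi 0 :=
      fun m hm => ⟨ne_of_gt (hgpos m hm.1), hm.1⟩
    calc (0:ENNReal) < volume (Ioc (0:ℝ) 1) := by simp
      _ ≤ _ := measure_mono hsub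
  have hA : ∀ s : ℝ, 0 < s → ∫ m in Ioc (0:ℝ) s, g m ≤ δ^e₂ * (s^(e₁+1)/(e₁+1)) := by
    intro s hs
    have hi1 : IntegrableOn g (Ioc 0 s) := hgint.mono_set Ioc_subset_Ioi_self
    have hi2 : IntegrableOn (fun m : ℝ => δ^e₂ * m^e₁) (Ioc 0 s) :=
      Integrable.const_mul ((intervalIntegrable_iff_integrableOn_Ioc_of_le hs.le).1
        (intervalIntegral.intervalIntegrable_rpow' he₁gt)) _
    have h1 : ∫ m in Ioc (0:ℝ) s, g m ≤ ∫ m in Ioc (0:ℝ) s, δ^e₂ * m^e₁ :=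
      setIntegral_mono_on hi1 hi2 measurableSet_Ioc (fun m hm => hgbound1 m hm.1)
    have h2 : ∫ m in Ioc (0:ℝ) s, δ^e₂ * m^e₁ = δ^e₂ * (s^(e₁+1)/(e₁+1)) := by
      rw [MeasureTheory.integral_const_mul]
      congr 1
      rw [← intervalIntegral.integral_of_le hs.le, integral_rpow (Or.inl he₁gt),
        Real.zero_rpow (show (0:ℝ) < e₁+1 by linarith).ne']
      ring
    linarith only [h1, h2]
  have hB : ∀ M : ℝ, 0 < M → ∫ m in Ioi M, g m ≤ δ'^e₂ * (β₀ * M^(e₁+2*e₂+1)) := by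
    intro M hM
    have hi1 : IntegrableOn g (Ioi M) := hgint.mono_set (Ioi_subset_Ioi hM.le)
    have hi2 : IntegrableOn (fun m : ℝ => δ'^e₂ * m^(e₁+2*e₂)) (Ioi M) :=
      (integrableOn_Ioi_rpow_of_lt he₃lt hM).const_mul _
    have h1 : ∫ m in Ioi M, g m ≤ ∫ m in Ioi M, δ'^e₂ * m^(e₁+2*e₂) :=
      setIntegral_mono_on hi1 hi2 measurableSet_Ioi (fun m hm => hgbound2 m (lt_trans hM hm))
    have h2 : ∫ m in Ioi M, δ'^e₂ * m^(e₁+2*e₂) = δ'^e₂ * (β₀ * M^(e₁+2*e₂+1)) := by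
      rw [MeasureTheory.integral_const_mul, integral_Ioi_rpow_of_lt he₃lt hM]
      congr 1
      rw [he₃1]
      field_simp
    linarith only [h1, h2]
  -- ### limit function and its continuity
  have hQ'pos : ∀ w : ℝ, 0 < c₂*w^2 + c₁*w + c₀ := by
    intro w
    have h4 := dulac_quad_lb (c₀ := c₂) (c₁ := c₁) (c₂ := c₀) hc₂p hc₀p w
    have h5 : 0 < (4*c₂*c₀ - c₁^2)/(4*c₂) := div_pos (by linarith only [hnum]) (by linarith only [hc₂p])
    linarith only [h4, h5]
  obtain ⟨hfun, hhdef⟩ : ∃ hh : ℝ × ℝ → ℝ, hh = fun p : ℝ × ℝ =>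
      ζ₀^(-(b₀/a₀)) * (c₂*(p.1/ζ₀)^2 + c₁*(p.1/ζ₀) + c₀)^(-(1/v)) * p.2^β₀ := ⟨_, rfl⟩
  have hcont : ContinuousAt hfun ((0:ℝ), I) := by
    rw [hhdef]
    apply ContinuousAt.mul
    · apply ContinuousAt.mul continuousAt_const
      apply ContinuousAt.rpow_const (by fun_prop)
      left
      show c₂*((0:ℝ)/ζ₀)^2 + c₁*((0:ℝ)/ζ₀) + c₀ ≠ 0
      rw [zero_div]
      simpa using (hQ'pos 0).ne'
    · exact (continuous_snd.continuousAt).rpow_const (Or.inl hIpos.ne')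
  have hIdef' : I = ∫ M in Ioi (0:ℝ), M ^ e₁ * (c₀*M^2 + c₁*M + c₂) ^ e₂ := by
    rw [hIdef]; simp only [hgdef]
  have hω₀fun : hfun ((0:ℝ), I) = ω₀ := by
    rw [hhdef, hω₀]
    simp only [← he₁def, ← he₂def, ← hIdef']
    rw [zero_div, show c₂*(0:ℝ)^2 + c₁*0 + c₀ = c₀ by ring]
    ring
  -- ### choice of T₀
  intro ε hε
  obtain ⟨dc, hdcpos, hdc⟩ := Metric.continuousAt_iff.1 hcont ε hε
  obtain ⟨c₆, hc₆def⟩ : ∃ x : ℝ, x = 1/(δ'^κ * ζ₀^(b₀/c₀)) := ⟨_, rfl⟩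
  have hc₆p : 0 < c₆ := by rw [hc₆def]; positivity
  obtain ⟨C₇, hC₇def⟩ : ∃ x : ℝ, x = δ^e₂/(e₁+1) * ((1/(η*δ^κ))^2 * I)
      + δ'^e₂*β₀ * ((c₆/ζ₀^(a₀/c₀))^2 * I) := ⟨_, rfl⟩
  have ht0 : Filter.Tendsto (fun T : ℝ => c₆^2*I/T) Filter.atTop (nhds 0) :=
    Filter.Tendsto.div_atTop tendsto_const_nhds Filter.tendsto_id
  have ht1 : Filter.Tendsto (fun T : ℝ => (c₆^2*I/T)^β₀) Filter.atTop (nhds 0) := by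
    have l2 : ContinuousAt (fun z : ℝ => z^β₀) 0 := Real.continuousAt_rpow_const 0 β₀ (Or.inr hβ₀p.le)
    have := l2.tendsto.comp ht0
    simpa [Function.comp_def, Real.zero_rpow hβ₀p.ne'] using this
  have ht2 : Filter.Tendsto (fun T : ℝ => C₇/T) Filter.atTop (nhds 0) :=
    Filter.Tendsto.div_atTop tendsto_const_nhds Filter.tendsto_id
  have hev : ∀ᶠ T : ℝ in Filter.atTop, (c₆^2*I/T)^β₀ < dc ∧ C₇/T < dc :=
    (ht1.eventually (eventually_lt_nhds hdcpos)).and (ht2.eventually (eventually_lt_nhds hdcpos))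
  obtain ⟨N, hN⟩ := Filter.eventually_atTop.1 hev
  refine ⟨max N 1, lt_of_lt_of_le one_pos (le_max_right N 1), fun T hT ξ ω hadm => ?_⟩
  have hT1 : (1:ℝ) ≤ T := le_trans (le_max_right N 1) hT
  have hTpos : 0 < T := lt_of_lt_of_le one_pos hT1
  obtain ⟨hsmall1, hsmall2⟩ := hN T (le_trans (le_max_left N 1) hT)
  obtain ⟨hξ, hω, x, y, hpos, hderiv, hx0, hy0, hxT, hyT⟩ := hadm
  -- ### the solution, ρ = x/y and the first integral F
  have hyne : ∀ t ∈ Icc (0:ℝ) T, y t ≠ 0 := fun t ht => (hpos t ht).2.ne'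
  obtain ⟨ρ, hρdef⟩ : ∃ f : ℝ → ℝ, f = fun t => x t / y t := ⟨_, rfl⟩
  have hρval : ∀ t, ρ t = x t / y t := fun t => by rw [hρdef]
  have hρpos : ∀ t ∈ Icc (0:ℝ) T, 0 < ρ t := fun t ht => by
    rw [hρval]; exact div_pos (hpos t ht).1 (hpos t ht).2
  have hρd : ∀ t ∈ Icc (0:ℝ) T,
      HasDerivAt ρ (ρ t * (y t)^2 * (c₀*(ρ t)^2 + c₁*(ρ t) + c₂)) t := by
    intro t ht
    have h := (hderiv t ht).1.div (hderiv t ht).2 (hyne t ht)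
    simp only [hρdef]
    refine h.congr_deriv ?_
    rw [hc₀, hc₁, hc₂]
    field_simp [hyne t ht]
    ring
  have hxc : ContinuousOn x (Icc 0 T) := fun t ht => ((hderiv t ht).1.continuousAt).continuousWithinAt
  have hyc : ContinuousOn y (Icc 0 T) := fun t ht => ((hderiv t ht).2.continuousAt).continuousWithinAt
  have hρc : ContinuousOn ρ (Icc 0 T) := by rw [hρdef]; exact hxc.div hyc hyne
  have hρmono : StrictMonoOn ρ (Icc 0 T) := by
    apply strictMonoOn_of_deriv_pos (convex_Icc 0 T) hρc
    intro t ht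
    rw [interior_Icc] at ht
    have ht' : t ∈ Icc (0:ℝ) T := Ioo_subset_Icc_self ht
    rw [(hρd t ht').deriv]
    exact mul_pos (mul_pos (hρpos t ht') (pow_pos (hpos t ht').2 2)) (hQpos (ρ t))
  obtain ⟨F, hFdef⟩ : ∃ f : ℝ → ℝ,
      f = fun t => y t * ρ t ^ q * (c₀*(ρ t)^2 + c₁*(ρ t) + c₂) ^ κ := ⟨_, rfl⟩
  have hFpos : ∀ t ∈ Icc (0:ℝ) T, 0 < F t := fun t ht => by
    rw [hFdef]
    exact mul_pos (mul_pos (hpos t ht).2 (Real.rpow_pos_of_pos (hρpos t ht) q))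
      (Real.rpow_pos_of_pos (hQpos (ρ t)) κ)
  have hFd : ∀ t ∈ Icc (0:ℝ) T, HasDerivAt F 0 t := by
    intro t ht
    have hρt := hρpos t ht
    have hyt := (hpos t ht).2
    have hQt := hQpos (ρ t)
    have hρd' := hρd t ht
    have hy' := (hderiv t ht).2
    have h1 : HasDerivAt (fun s => ρ s ^ q)
        ((ρ t * (y t)^2 * (c₀*(ρ t)^2 + c₁*(ρ t) + c₂)) * q * ρ t ^ (q-1)) t :=
      hρd'.rpow_const (Or.inl hρt.ne')
    have h2 : HasDerivAt (fun s => c₀*(ρ s)^2 + c₁*(ρ s) + c₂)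
        ((2*c₀*(ρ t) + c₁) * (ρ t * (y t)^2 * (c₀*(ρ t)^2 + c₁*(ρ t) + c₂))) t := by
      have ha := ((hρd'.pow 2).const_mul c₀).add (hρd'.const_mul c₁)
      have hb := ha.add_const c₂
      refine hb.congr_deriv ?_
      push_cast
      ring
    have h3' : HasDerivAt (fun s => (c₀*(ρ s)^2 + c₁*(ρ s) + c₂) ^ κ)
        (((2*c₀*(ρ t) + c₁) * (ρ t * (y t)^2 * (c₀*(ρ t)^2 + c₁*(ρ t) + c₂))) * κ *
          (c₀*(ρ t)^2 + c₁*(ρ t) + c₂) ^ (κ-1)) t :=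
      h2.rpow_const (Or.inl hQt.ne')
    have h4 := (hy'.mul h1).mul h3'
    rw [hFdef]
    refine (h4.congr_deriv ?_)
    simp only [Pi.mul_apply]; symm
    have hxy : x t = ρ t * y t := by rw [hρval]; field_simp
    have hq1 : ρ t ^ q = ρ t ^ (q-1) * ρ t := by
      rw [← Real.rpow_add_one hρt.ne' (q-1)]; norm_num
    have hκ1 : (c₀*(ρ t)^2 + c₁*(ρ t) + c₂) ^ κ
        = (c₀*(ρ t)^2 + c₁*(ρ t) + c₂) ^ (κ-1) * (c₀*(ρ t)^2 + c₁*(ρ t) + c₂) := by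
      rw [← Real.rpow_add_one hQt.ne' (κ-1)]; norm_num
    rw [hxy, hq1, hκ1]
    linear_combination ((y t)^3 * (ρ t) * (ρ t ^ (q-1)) * ((c₀*(ρ t)^2 + c₁*(ρ t) + c₂) ^ (κ-1))
      * (c₀*(ρ t)^2 + c₁*(ρ t) + c₂)) * hpoly (ρ t)
  have hFc : ContinuousOn F (Icc 0 T) := fun t ht => ((hFd t ht).continuousAt).continuousWithinAt
  have hFconst : ∀ t ∈ Icc (0:ℝ) T, F t = F 0 :=
    constant_of_has_deriv_right_zero hFc
      (fun t ht => (hFd t (Ico_subset_Icc_self ht)).hasDerivWithinAt)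
  -- ### change of variables: T * (F 0)² = ∫ g over (ρ 0, ρ T]
  have h0mem : (0:ℝ) ∈ Icc (0:ℝ) T := left_mem_Icc.2 hTpos.le
  have hTmem : T ∈ Icc (0:ℝ) T := right_mem_Icc.2 hTpos.le
  have hρ0pos : 0 < ρ 0 := hρpos 0 h0mem
  have hρTpos : 0 < ρ T := hρpos T hTmem
  have hF0pos : 0 < F 0 := hFpos 0 h0mem
  have hρ0T : ρ 0 < ρ T := hρmono h0mem hTmem hTpos
  have huIcc : uIcc (0:ℝ) T = Icc 0 T := uIcc_of_le hTpos.le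
  have hchg : ∫ t in (0:ℝ)..T,
      (fun s => ρ s * (y s)^2 * (c₀*(ρ s)^2 + c₁*(ρ s) + c₂)) t • (g ∘ ρ) t
      = ∫ u in (ρ 0)..(ρ T), g u := by
    apply intervalIntegral.integral_comp_smul_deriv'
    · rw [huIcc]; exact fun t ht => hρd t ht
    · rw [huIcc]
      exact (hρc.mul (hyc.pow 2)).mul
        (((continuousOn_const.mul (hρc.pow 2)).add (continuousOn_const.mul hρc)).add
          continuousOn_const)
    · refine hgcont.mono ?_
      rw [huIcc]
      rintro _ ⟨t, ht, rfl⟩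
      exact hρpos t ht
  have hEq : EqOn (fun t => (fun s => ρ s * (y s)^2 * (c₀*(ρ s)^2 + c₁*(ρ s) + c₂)) t • (g ∘ ρ) t)
      (fun _ => (F 0)^2) (uIcc (0:ℝ) T) := by
    rw [huIcc]
    intro t ht
    have hρt := hρpos t ht
    have hyt := (hpos t ht).2
    have hQt := hQpos (ρ t)
    have hFt := hFconst t ht
    simp only [Function.comp, smul_eq_mul, hgdef]
    rw [← hFt, hFdef]
    have e1 : ρ t * ρ t ^ e₁ = ρ t ^ (q+q) := by
      rw [mul_comm, ← Real.rpow_add_one hρt.ne' e₁, he₁q]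
    have e2 : (c₀*(ρ t)^2 + c₁*(ρ t) + c₂) * (c₀*(ρ t)^2 + c₁*(ρ t) + c₂) ^ e₂
        = (c₀*(ρ t)^2 + c₁*(ρ t) + c₂) ^ (κ+κ) := by
      rw [mul_comm, ← Real.rpow_add_one hQt.ne' e₂, he₂κ]
    have e3 : ρ t ^ (q+q) = ρ t ^ q * ρ t ^ q := Real.rpow_add hρt q q
    have e4 : (c₀*(ρ t)^2 + c₁*(ρ t) + c₂) ^ (κ+κ)
        = (c₀*(ρ t)^2 + c₁*(ρ t) + c₂) ^ κ * (c₀*(ρ t)^2 + c₁*(ρ t) + c₂) ^ κ :=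
      Real.rpow_add hQt κ κ
    rw [e3] at e1
    rw [e4] at e2
    linear_combination ((y t)^2 * ((c₀*(ρ t)^2 + c₁*(ρ t) + c₂) ^ e₂)
        * (c₀*(ρ t)^2 + c₁*(ρ t) + c₂)) * (by ring : (0:ℝ) = 0)
      + ((y t)^2 * ((c₀*(ρ t)^2 + c₁*(ρ t) + c₂)) * ((c₀*(ρ t)^2 + c₁*(ρ t) + c₂) ^ e₂)) * e1
      + ((y t)^2 * (ρ t ^ q * ρ t ^ q)) * e2
  obtain ⟨Δψ, hΔψdef⟩ : ∃ z : ℝ, z = ∫ u in Ioc (ρ 0) (ρ T), g u := ⟨_, rfl⟩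
  have hkey : T * (F 0)^2 = Δψ := by
    have c1 : ∫ t in (0:ℝ)..T,
        (fun s => ρ s * (y s)^2 * (c₀*(ρ s)^2 + c₁*(ρ s) + c₂)) t • (g ∘ ρ) t
        = ∫ t in (0:ℝ)..T, (F 0)^2 := intervalIntegral.integral_congr hEq
    have c2 : ∫ t in (0:ℝ)..T, (F 0)^2 = T * (F 0)^2 := by
      rw [intervalIntegral.integral_const, smul_eq_mul, sub_zero]
    rw [hΔψdef, ← intervalIntegral.integral_of_le hρ0T.le, ← hchg, c1, c2]
  have hΔψpos : 0 < Δψ := by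
    rw [← hkey]; exact mul_pos hTpos (pow_pos hF0pos 2)
  -- ### splitting of I
  have hiA : IntegrableOn g (Ioc 0 (ρ 0)) := hgint.mono_set Ioc_subset_Ioi_self
  have hiM : IntegrableOn g (Ioc (ρ 0) (ρ T)) :=
    hgint.mono_set (fun m hm => lt_trans hρ0pos hm.1)
  have hiB : IntegrableOn g (Ioi (ρ T)) := hgint.mono_set (Ioi_subset_Ioi hρTpos.le)
  have hiAM : IntegrableOn g (Ioc 0 (ρ T)) := hgint.mono_set Ioc_subset_Ioi_self
  have hsplit : I = (∫ m in Ioc (0:ℝ) (ρ 0), g m) + Δψ + (∫ m in Ioi (ρ T), g m) := by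
    have d1 : Disjoint (Ioc (0:ℝ) (ρ 0)) (Ioc (ρ 0) (ρ T)) := Set.Ioc_disjoint_Ioc_of_le le_rfl
    have d2 : Disjoint (Ioc (0:ℝ) (ρ T)) (Ioi (ρ T)) := by
      rw [Set.disjoint_left]
      intro a ha ha'
      exact absurd ha.2 (not_le.2 ha')
    have e2' : Ioc (0:ℝ) (ρ T) ∪ Ioi (ρ T) = Ioi 0 := Ioc_union_Ioi_eq_Ioi hρTpos.le
    have e1' : Ioc (0:ℝ) (ρ 0) ∪ Ioc (ρ 0) (ρ T) = Ioc 0 (ρ T) :=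
      Ioc_union_Ioc_eq_Ioc hρ0pos.le hρ0T.le
    rw [hIdef, ← e2', setIntegral_union d2 measurableSet_Ioi hiAM hiB, ← e1',
      setIntegral_union d1 measurableSet_Ioc hiA hiM, hΔψdef]
  have hAnn : 0 ≤ ∫ m in Ioc (0:ℝ) (ρ 0), g m :=
    setIntegral_nonneg measurableSet_Ioc (fun m hm => (hgpos m hm.1).le)
  have hBnn : 0 ≤ ∫ m in Ioi (ρ T), g m :=
    setIntegral_nonneg measurableSet_Ioi (fun m hm => (hgpos m (lt_trans hρTpos hm)).le)
  have hΔψleI : Δψ ≤ I := by linarith only [hsplit, hAnn, hBnn]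
  have hF0sq : (F 0)^2 ≤ I / T := by
    rw [le_div_iff₀ hTpos]; nlinarith only [hkey, hΔψleI]
  -- ### endpoint values of F
  have hρ0val : ρ 0 = ξ/η := by rw [hρval, hx0, hy0]
  have hρTval : ρ T = ζ₀/ω := by rw [hρval, hxT, hyT]
  have hFTval : F 0 = ω * (ρ T)^q * (c₀*(ρ T)^2 + c₁*(ρ T) + c₂)^κ := by
    rw [← hFconst T hTmem, hFdef]
    simp only []
    rw [hyT]
  have hF0val : F 0 = η * (ρ 0)^q * (c₀*(ρ 0)^2 + c₁*(ρ 0) + c₂)^κ := by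
    rw [hFdef]
    simp only []
    rw [hy0]
  -- lower bound (entry): ρ 0 small
  have hρ0q : (ρ 0)^q ≤ F 0 / (η * δ^κ) := by
    rw [le_div_iff₀ (by positivity)]
    have hQκ0 : δ^κ ≤ (c₀*(ρ 0)^2 + c₁*(ρ 0) + c₂)^κ :=
      Real.rpow_le_rpow hδp.le (hQlb _) hκp.le
    calc (ρ 0)^q * (η*δ^κ) = η * ((ρ 0)^q * δ^κ) := by ring
      _ ≤ η * ((ρ 0)^q * (c₀*(ρ 0)^2 + c₁*(ρ 0) + c₂)^κ) := by
          apply mul_le_mul_of_nonneg_left _ hη.le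
          exact mul_le_mul_of_nonneg_left hQκ0 (Real.rpow_nonneg hρ0pos.le q)
      _ = F 0 := by rw [hF0val]; ring
  -- lower bound (exit): ω small
  have hωpow : δ'^κ * ζ₀^(b₀/c₀) * ω^(a₀/c₀) ≤ F 0 := by
    have hQκT : (δ' * (ρ T)^2)^κ ≤ (c₀*(ρ T)^2+c₁*(ρ T)+c₂)^κ :=
      Real.rpow_le_rpow (by positivity) (hQlb' _) hκp.le
    have hsplitκ : (δ'*(ρ T)^2)^κ = δ'^κ * (ρ T)^(κ+κ) := by
      rw [Real.mul_rpow hδ'p.le (by positivity), ← Real.rpow_natCast (ρ T) 2,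
        ← Real.rpow_mul hρTpos.le]
      norm_num [two_mul]
    have hexp : (ρ T)^q * (ρ T)^(κ+κ) = (ρ T)^(b₀/c₀) := by
      rw [← Real.rpow_add hρTpos, h3]
    have hdivp : (ρ T)^(b₀/c₀) = ζ₀^(b₀/c₀) / ω^(b₀/c₀) := by
      rw [hρTval, Real.div_rpow hζ₀.le hω.le]
    have hrec : ω^(a₀/c₀) = ω / ω^(b₀/c₀) := by
      rw [← h10, Real.rpow_sub hω, Real.rpow_one]
    calc δ'^κ * ζ₀^(b₀/c₀) * ω^(a₀/c₀)
        = ω * ((ρ T)^q * (δ'^κ * (ρ T)^(κ+κ))) := by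
          rw [hrec]
          rw [show (ρ T)^q * (δ'^κ * (ρ T)^(κ+κ)) = δ'^κ * ((ρ T)^q * (ρ T)^(κ+κ)) by ring,
            hexp, hdivp]
          field_simp
      _ ≤ ω * ((ρ T)^q * (c₀*(ρ T)^2+c₁*(ρ T)+c₂)^κ) := by
          apply mul_le_mul_of_nonneg_left _ hω.le
          apply mul_le_mul_of_nonneg_left _ (Real.rpow_nonneg hρTpos.le q)
          rw [← hsplitκ]
          exact hQκT
      _ = F 0 := by rw [hFTval]; ring
  have hωc₆ : ω^(a₀/c₀) ≤ F 0 * c₆ := by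
    rw [hc₆def, mul_one_div, le_div_iff₀ (by positivity)]
    nlinarith only [hωpow]
  -- ### ω is small
  have hωsmall : ω ≤ (c₆^2*I/T)^β₀ := by
    have s1 : ω^(a₀/c₀) * ω^(a₀/c₀) ≤ (F 0 * c₆) * (F 0 * c₆) :=
      mul_self_le_mul_self (Real.rpow_nonneg hω.le _) hωc₆
    have s2 : ω^(a₀/c₀ + a₀/c₀) ≤ c₆^2*I/T := by
      rw [Real.rpow_add hω]
      calc ω^(a₀/c₀) * ω^(a₀/c₀) ≤ (F 0 * c₆) * (F 0 * c₆) := s1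
        _ = (F 0)^2 * c₆^2 := by ring
        _ ≤ (I/T) * c₆^2 := mul_le_mul_of_nonneg_right hF0sq (by positivity)
        _ = c₆^2*I/T := by ring
    have s3 : (ω^(a₀/c₀ + a₀/c₀))^β₀ = ω := by
      rw [← Real.rpow_mul hω.le, hpβ, Real.rpow_one]
    rw [← s3]
    exact Real.rpow_le_rpow (Real.rpow_nonneg hω.le _) s2 hβ₀p.le
  -- ### I - Δψ is small
  have hAbd : ∫ m in Ioc (0:ℝ) (ρ 0), g m ≤ δ^e₂/(e₁+1) * ((1/(η*δ^κ))^2 * I) / T := by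
    have s1 := hA (ρ 0) hρ0pos
    have s2 : (ρ 0)^(e₁+1) ≤ (F 0/(η*δ^κ))^2 := by
      rw [he₁q, Real.rpow_add hρ0pos, sq]
      exact mul_self_le_mul_self (Real.rpow_nonneg hρ0pos.le q) hρ0q
    have s3 : (F 0/(η*δ^κ))^2 ≤ (1/(η*δ^κ))^2 * (I/T) := by
      calc (F 0/(η*δ^κ))^2 = (F 0)^2 * (1/(η*δ^κ))^2 := by ring
        _ ≤ (I/T) * (1/(η*δ^κ))^2 := mul_le_mul_of_nonneg_right hF0sq (by positivity)
        _ = (1/(η*δ^κ))^2 * (I/T) := by ring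
    calc ∫ m in Ioc (0:ℝ) (ρ 0), g m ≤ δ^e₂ * ((ρ 0)^(e₁+1)/(e₁+1)) := s1
      _ ≤ δ^e₂ * (((1/(η*δ^κ))^2 * (I/T))/(e₁+1)) := by
          apply mul_le_mul_of_nonneg_left _ (Real.rpow_nonneg hδp.le e₂)
          exact (div_le_div_iff_of_pos_right he₁p).2 (le_trans s2 s3)
      _ = δ^e₂/(e₁+1) * ((1/(η*δ^κ))^2 * I) / T := by ring
  have hBbd : ∫ m in Ioi (ρ T), g m ≤ δ'^e₂*β₀ * ((c₆/ζ₀^(a₀/c₀))^2 * I) / T := by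
    have s1 := hB (ρ T) hρTpos
    have s2 : (ρ T)^(e₁+2*e₂+1) = (ω/ζ₀)^(a₀/c₀) * (ω/ζ₀)^(a₀/c₀) := by
      rw [he₃1, hρTval, Real.rpow_neg (by positivity), ← Real.inv_rpow (by positivity), inv_div,
        h1β, Real.rpow_add (by positivity)]
    have s4 : (ω/ζ₀)^(a₀/c₀) ≤ (F 0 * c₆)/ζ₀^(a₀/c₀) := by
      rw [Real.div_rpow hω.le hζ₀.le]
      exact (div_le_div_iff_of_pos_right (by positivity)).2 hωc₆
    have s5 : (ρ T)^(e₁+2*e₂+1) ≤ (c₆/ζ₀^(a₀/c₀))^2 * (I/T) := by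
      rw [s2]
      calc (ω/ζ₀)^(a₀/c₀) * (ω/ζ₀)^(a₀/c₀)
          ≤ ((F 0 * c₆)/ζ₀^(a₀/c₀)) * ((F 0 * c₆)/ζ₀^(a₀/c₀)) :=
            mul_self_le_mul_self (Real.rpow_nonneg (by positivity) _) s4
        _ = (F 0)^2 * (c₆/ζ₀^(a₀/c₀))^2 := by ring
        _ ≤ (I/T) * (c₆/ζ₀^(a₀/c₀))^2 := mul_le_mul_of_nonneg_right hF0sq (by positivity)
        _ = (c₆/ζ₀^(a₀/c₀))^2 * (I/T) := by ring
    calc ∫ m in Ioi (ρ T), g m ≤ δ'^e₂ * (β₀ * (ρ T)^(e₁+2*e₂+1)) := s1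
      _ ≤ δ'^e₂ * (β₀ * ((c₆/ζ₀^(a₀/c₀))^2 * (I/T))) := by
          apply mul_le_mul_of_nonneg_left _ (Real.rpow_nonneg hδ'p.le e₂)
          exact mul_le_mul_of_nonneg_left s5 hβ₀p.le
      _ = δ'^e₂*β₀ * ((c₆/ζ₀^(a₀/c₀))^2 * I) / T := by ring
  have hIΔψ : I - Δψ ≤ C₇ / T := by
    have : C₇/T = δ^e₂/(e₁+1) * ((1/(η*δ^κ))^2 * I) / T
        + δ'^e₂*β₀ * ((c₆/ζ₀^(a₀/c₀))^2 * I) / T := by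
      rw [hC₇def]; ring
    rw [this]
    linarith only [hsplit, hAbd, hBbd]
  -- ### the exact identity
  have hQ'ω : 0 < c₂*(ω/ζ₀)^2 + c₁*(ω/ζ₀) + c₀ := hQ'pos _
  have hstar : ω * T^β₀ = hfun (ω, Δψ) := by
    rw [hhdef]
    show ω * T^β₀ = ζ₀^(-(b₀/a₀)) * (c₂*(ω/ζ₀)^2 + c₁*(ω/ζ₀) + c₀)^(-(1/v)) * Δψ^β₀
    have hrhspos : 0 < ζ₀^(-(b₀/a₀)) * (c₂*(ω/ζ₀)^2 + c₁*(ω/ζ₀) + c₀)^(-(1/v)) * Δψ^β₀ :=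
      mul_pos (mul_pos (Real.rpow_pos_of_pos hζ₀ _) (Real.rpow_pos_of_pos hQ'ω _))
        (Real.rpow_pos_of_pos hΔψpos _)
    have hlhspos : 0 < ω * T^β₀ := mul_pos hω (Real.rpow_pos_of_pos hTpos _)
    apply Real.log_injOn_pos (mem_Ioi.2 hlhspos) (mem_Ioi.2 hrhspos)
    have lT : Real.log T = Real.log Δψ - 2*Real.log (F 0) := by
      have hTval : T = Δψ / (F 0)^2 := by
        rw [← hkey]; field_simp
      rw [hTval, Real.log_div hΔψpos.ne' (pow_pos hF0pos 2).ne', Real.log_pow]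
      push_cast
      ring
    have lF : Real.log (F 0) = Real.log ω + q*Real.log (ρ T)
        + κ*Real.log (c₀*(ρ T)^2+c₁*(ρ T)+c₂) := by
      rw [hFTval,
        Real.log_mul (mul_pos hω (Real.rpow_pos_of_pos hρTpos q)).ne'
          (Real.rpow_pos_of_pos (hQpos _) κ).ne',
        Real.log_mul hω.ne' (Real.rpow_pos_of_pos hρTpos q).ne',
        Real.log_rpow hρTpos, Real.log_rpow (hQpos _)]
    have lQ : Real.log (c₀*(ρ T)^2+c₁*(ρ T)+c₂)
        = 2*Real.log (ρ T) + Real.log (c₂*(ω/ζ₀)^2+c₁*(ω/ζ₀)+c₀) := by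
      have hfac : c₀*(ρ T)^2+c₁*(ρ T)+c₂ = (ρ T)^2 * (c₂*(ω/ζ₀)^2+c₁*(ω/ζ₀)+c₀) := by
        rw [hρTval]
        field_simp
        ring
      rw [hfac, Real.log_mul (pow_pos hρTpos 2).ne' hQ'ω.ne', Real.log_pow]
      push_cast
      ring
    have lρT : Real.log (ρ T) = Real.log ζ₀ - Real.log ω := by
      rw [hρTval, Real.log_div hζ₀.ne' hω.ne']
    rw [Real.log_mul hω.ne' (Real.rpow_pos_of_pos hTpos _).ne',
      Real.log_mul (mul_pos (Real.rpow_pos_of_pos hζ₀ _) (Real.rpow_pos_of_pos hQ'ω _)).ne'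
        (Real.rpow_pos_of_pos hΔψpos _).ne',
      Real.log_mul (Real.rpow_pos_of_pos hζ₀ _).ne' (Real.rpow_pos_of_pos hQ'ω _).ne',
      Real.log_rpow hTpos, Real.log_rpow hζ₀, Real.log_rpow hQ'ω, Real.log_rpow hΔψpos,
      lT, lF, lQ, lρT]
    linear_combination (Real.log ω) * hLω - (Real.log ζ₀) * hLζ
      - (Real.log (c₂*(ω/ζ₀)^2+c₁*(ω/ζ₀)+c₀)) * hLQ
  -- ### conclusion
  have hclose : dist ((ω, Δψ) : ℝ × ℝ) ((0:ℝ), I) < dc := by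
    rw [Prod.dist_eq]
    apply max_lt
    · rw [Real.dist_eq, sub_zero, abs_of_pos hω]
      exact lt_of_le_of_lt hωsmall hsmall1
    · rw [Real.dist_eq, abs_sub_comm, abs_of_nonneg (sub_nonneg.2 hΔψleI)]
      exact lt_of_le_of_lt hIΔψ hsmall2
  have hfin := hdc hclose
  rw [Real.dist_eq, hω₀fun] at hfin
  rwa [hstar]
end

section
/- (Leading coefficient of the Dulac map.) Assume Δ > 0 and fix ζ₀, η > 0. Then for every ε > 0 there exists δ > 0 such that for all ξ, ω ∈ (0, δ) satisfying the level-set relation ξ^u · η^v · (c₀ξ² + c₁ξη + c₂η²) = ζ₀^u · ω^v · (c₀ζ₀² + c₁ζ₀ω + c₂ω²), one has |ω · ξ^{−u/v} − (c₂ η^{v+2} / (c₀ ζ₀^{u+2}))^{1/v}| < ε. In other words, along level sets of the first integral, ω ~ (c₂η^{v+2}/(c₀ζ₀^{u+2}))^{1/v} · ξ^{u/v} as ξ → 0⁺. -/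
/-- (Leading coefficient of the Dulac map.) For `Δ > 0`, along
level sets of the first integral, `ω ∼ (c₂ η^{v+2}/(c₀ ζ₀^{u+2}))^{1/v} · ξ^{u/v}`
as `ξ → 0⁺`. -/
theorem dulac_map_leading_coefficient
    (a₀ a₁ a₂ b₀ b₁ b₂ : ℝ)
    (ha₀ : 0 < a₀) (ha₂ : 0 < a₂) (hb₀ : 0 < b₀) (hb₂ : 0 < b₂)
    (c₀ c₁ c₂ Δ u v : ℝ)
    (hc₀ : c₀ = a₀ + b₀) (hc₁ : c₁ = a₁ + b₁) (hc₂ : c₂ = a₂ + b₂)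
    (hΔdef : Δ = a₂ * b₀ - a₀ * b₂) (hΔ : 0 < Δ)
    (hdisc : c₁ ^ 2 < 4 * c₀ * c₂)
    (hu : u = 2 * b₂ * c₀ / Δ) (hv : v = 2 * a₀ * c₂ / Δ)
    (ζ₀ η : ℝ) (hζ₀ : 0 < ζ₀) (hη : 0 < η) :
    ∀ ε > 0, ∃ δ > 0, ∀ ξ ω : ℝ, ξ ∈ Set.Ioo (0 : ℝ) δ → ω ∈ Set.Ioo (0 : ℝ) δ →
      ξ ^ u * η ^ v * (c₀ * ξ ^ 2 + c₁ * ξ * η + c₂ * η ^ 2)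
        = ζ₀ ^ u * ω ^ v * (c₀ * ζ₀ ^ 2 + c₁ * ζ₀ * ω + c₂ * ω ^ 2) →
      |ω * ξ ^ (-(u / v)) -
        (c₂ * η ^ (v + 2) / (c₀ * ζ₀ ^ (u + 2))) ^ (1 / v)| < ε := by
  have hc₀' : 0 < c₀ := by rw [hc₀]; linarith
  have hc₂' : 0 < c₂ := by rw [hc₂]; linarith
  have hu' : 0 < u := by rw [hu]; positivity
  have hv' : 0 < v := by rw [hv]; positivity
  have hQ : ∀ x y : ℝ, 0 < x → 0 < c₀ * x ^ 2 + c₁ * x * y + c₂ * y ^ 2 := by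
    intro x y hx
    rcases eq_or_ne y 0 with rfl | hy
    · have : 0 < c₀ * x ^ 2 := by positivity
      nlinarith
    · have hy2 : 0 < y ^ 2 := by positivity
      nlinarith [sq_nonneg (2 * c₀ * x + c₁ * y),
        mul_pos (show (0:ℝ) < 4 * c₀ * c₂ - c₁ ^ 2 by linarith) hy2]
  intro ε hε
  have hG0 : (0:ℝ) < ζ₀ ^ u * (c₀ * ζ₀ ^ 2 + c₁ * ζ₀ * (0:ℝ) + c₂ * (0:ℝ) ^ 2) := by
    have h := hQ ζ₀ 0 hζ₀
    have h2 : (0:ℝ) < ζ₀ ^ u := Real.rpow_pos_of_pos hζ₀ u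
    exact mul_pos h2 h
  have hf : ContinuousAt (fun p : ℝ × ℝ =>
      (η ^ v * (c₀ * p.1 ^ 2 + c₁ * p.1 * η + c₂ * η ^ 2) /
        (ζ₀ ^ u * (c₀ * ζ₀ ^ 2 + c₁ * ζ₀ * p.2 + c₂ * p.2 ^ 2))) ^ (1 / v))
      ((0 : ℝ), (0 : ℝ)) := by
    apply ContinuousAt.rpow_const
    · exact ContinuousAt.div (by fun_prop) (by fun_prop) hG0.ne'
    · right; positivity
  obtain ⟨δ, hδ, hδ'⟩ := Metric.continuousAt_iff.mp hf ε hε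
  refine ⟨δ, hδ, ?_⟩
  intro ξ ω hξ hω hrel
  obtain ⟨hξ0, hξδ⟩ := hξ
  obtain ⟨hω0, hωδ⟩ := hω
  have hdist : dist ((ξ, ω) : ℝ × ℝ) ((0 : ℝ), (0 : ℝ)) < δ := by
    rw [Prod.dist_eq]
    simp only [Real.dist_eq, sub_zero, abs_of_pos hξ0, abs_of_pos hω0]
    exact max_lt hξδ hωδ
  have key := hδ' hdist
  simp only [Real.dist_eq] at key
  have hHpos : 0 < c₀ * ξ ^ 2 + c₁ * ξ * η + c₂ * η ^ 2 := hQ ξ η hξ0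
  have hGpos : 0 < c₀ * ζ₀ ^ 2 + c₁ * ζ₀ * ω + c₂ * ω ^ 2 := hQ ζ₀ ω hζ₀
  have hξu : (0:ℝ) < ξ ^ u := Real.rpow_pos_of_pos hξ0 u
  have hζu : (0:ℝ) < ζ₀ ^ u := Real.rpow_pos_of_pos hζ₀ u
  have hηv : (0:ℝ) < η ^ v := Real.rpow_pos_of_pos hη v
  have hωv : ω ^ v = ξ ^ u * (η ^ v * (c₀ * ξ ^ 2 + c₁ * ξ * η + c₂ * η ^ 2) /
      (ζ₀ ^ u * (c₀ * ζ₀ ^ 2 + c₁ * ζ₀ * ω + c₂ * ω ^ 2))) := by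
    have hden : ζ₀ ^ u * (c₀ * ζ₀ ^ 2 + c₁ * ζ₀ * ω + c₂ * ω ^ 2) ≠ 0 := by positivity
    rw [← mul_div_assoc, eq_div_iff hden]
    linear_combination -hrel
  have hωeq : ω = ξ ^ (u / v) *
      (η ^ v * (c₀ * ξ ^ 2 + c₁ * ξ * η + c₂ * η ^ 2) /
      (ζ₀ ^ u * (c₀ * ζ₀ ^ 2 + c₁ * ζ₀ * ω + c₂ * ω ^ 2))) ^ (1 / v) := by
    have h1 : ω = (ω ^ v) ^ (1 / v) := by
      rw [← Real.rpow_mul hω0.le, mul_one_div_cancel hv'.ne', Real.rpow_one]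
    conv_lhs => rw [h1, hωv]
    rw [Real.mul_rpow hξu.le (by positivity), ← Real.rpow_mul hξ0.le, mul_one_div]
  have hfin : ω * ξ ^ (-(u / v)) =
      (η ^ v * (c₀ * ξ ^ 2 + c₁ * ξ * η + c₂ * η ^ 2) /
      (ζ₀ ^ u * (c₀ * ζ₀ ^ 2 + c₁ * ζ₀ * ω + c₂ * ω ^ 2))) ^ (1 / v) := by
    conv_lhs => rw [hωeq]
    rw [mul_right_comm, ← Real.rpow_add hξ0, add_neg_cancel, Real.rpow_zero, one_mul]
  have hLeq : (η ^ v * (c₀ * (0:ℝ) ^ 2 + c₁ * (0:ℝ) * η + c₂ * η ^ 2) /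
        (ζ₀ ^ u * (c₀ * ζ₀ ^ 2 + c₁ * ζ₀ * (0:ℝ) + c₂ * (0:ℝ) ^ 2))) ^ (1 / v)
      = (c₂ * η ^ (v + 2) / (c₀ * ζ₀ ^ (u + 2))) ^ (1 / v) := by
    congr 1
    rw [Real.rpow_add hη, Real.rpow_add hζ₀]
    rw [show (2:ℝ) = ((2:ℕ):ℝ) by norm_num, Real.rpow_natCast, Real.rpow_natCast]
    ring
  rw [hfin]
  rw [hLeq] at key
  exact key
end
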